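/- arXiv:1509.01485 — 3 statements merged into one kernel-verified Lean document; each statement's English description precedes it below -/
import Mathlib

section
/- Let e = (e_n) be the canonical basis of ℓ_p (1 ≤ p < ∞) or c₀, let X, Y be Banach spaces, let 1 ≤ ξ, ζ < ω₁ be countable ordinals, and suppose S ∈ JS_{e,ξ}(X,Y) and T ∈ JS_{e,ζ}(X,Y). Then S + T ∈ JS_{e,ξ+ζ}(X,Y). Moreover, if ξ = ω₁ or ζ = ω₁, then S + T ∈ JS_{e,ω₁}(X,Y). -/
open Ordinal Filter Topology

/-- A system of Schreier families `S ξ` for ordinals `ξ ≤ ω₁`, satisfying the usual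
inductive definition (with some fixed choice of cofinal sequences at limit ordinals),
and with `S ξ` equal to the family of all finite subsets of `ℕ` for `ξ = ω₁`. -/
structure SchreierSystem where
  S : Ordinal → Set (Finset ℕ)
  zero : S 0 = {F : Finset ℕ | F.card ≤ 1}
  succ : ∀ ζ : Ordinal, ζ < ω₁ → S (ζ + 1) =
    {F : Finset ℕ | F = ∅ ∨ ∃ (n : ℕ) (f : Fin n → Finset ℕ),
      (∀ i, f i ∈ S ζ) ∧
      (∀ i j : Fin n, i < j → ∀ a ∈ f i, ∀ b ∈ f j, a < b) ∧
      (∀ a ∈ F, n ≤ a) ∧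
      F = Finset.univ.biUnion f}
  limit : ∀ ξ : Ordinal, Order.IsSuccLimit ξ → ξ < ω₁ →
    ∃ ζs : ℕ → Ordinal, StrictMono ζs ∧ (∀ n, ¬ Order.IsSuccLimit (ζs n)) ∧ (⨆ n, ζs n) = ξ ∧
      S ξ = {F : Finset ℕ | ∃ n : ℕ, F ∈ S (ζs n) ∧ ∀ a ∈ F, n + 1 ≤ a}
  top : ∀ ξ : Ordinal, ω₁ ≤ ξ → S ξ = Set.univ

/-- `x` is a basic sequence: nonzero terms whose partial-sum projections are uniformly
bounded (the standard Grunblum criterion for being a Schauder basis of the closed span). -/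
def IsBasicSeq {X : Type*} [NormedAddCommGroup X] [NormedSpace ℝ X] (x : ℕ → X) : Prop :=
  (∀ n, x n ≠ 0) ∧ ∃ K : ℝ, 1 ≤ K ∧ ∀ (a : ℕ → ℝ) (m n : ℕ), m ≤ n →
    ‖∑ i ∈ Finset.range m, a i • x i‖ ≤ K * ‖∑ i ∈ Finset.range n, a i • x i‖

/-- `x` dominates `y`: `‖∑ a n • y n‖ ≤ C ‖∑ a n • x n‖` for all finitely supported scalars. -/
def Dominates {X Y : Type*} [NormedAddCommGroup X] [NormedSpace ℝ X]
    [NormedAddCommGroup Y] [NormedSpace ℝ Y] (x : ℕ → X) (y : ℕ → Y) : Prop :=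
  ∃ C : ℝ, 0 < C ∧ ∀ (a : ℕ → ℝ) (F : Finset ℕ),
    ‖∑ n ∈ F, a n • y n‖ ≤ C * ‖∑ n ∈ F, a n • x n‖

/-- `e` has the norm of the canonical basis of `ℓ_p`. -/
def IsLpBasis (p : ℝ) {E : Type*} [NormedAddCommGroup E] [NormedSpace ℝ E]
    (e : ℕ → E) : Prop :=
  ∀ (a : ℕ → ℝ) (F : Finset ℕ),
    ‖∑ n ∈ F, a n • e n‖ = (∑ n ∈ F, |a n| ^ p) ^ (1 / p)

/-- `e` has the norm of the canonical basis of `c₀`. -/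
def IsC0Basis {E : Type*} [NormedAddCommGroup E] [NormedSpace ℝ E] (e : ℕ → E) : Prop :=
  ∀ (a : ℕ → ℝ) (F : Finset ℕ),
    ‖∑ n ∈ F, a n • e n‖ = ((F.sup fun n => ‖a n‖₊ : NNReal) : ℝ)

/-- `x` `S_ξ`-dominates `e` (relative to the Schreier system `𝒮`). -/
def SDominates (𝒮 : SchreierSystem) (ξ : Ordinal) {X E : Type*}
    [NormedAddCommGroup X] [NormedSpace ℝ X] [NormedAddCommGroup E] [NormedSpace ℝ E]
    (x : ℕ → X) (e : ℕ → E) : Prop :=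
  ∃ C : ℝ, 1 ≤ C ∧ ∀ (a : ℕ → ℝ), ∀ F ∈ 𝒮.S ξ,
    ‖∑ n ∈ F, a n • e n‖ ≤ C * ‖∑ n ∈ F, a n • x n‖

/-- `T` is `(e,ξ)`-singular (class `WS_{e,ξ}`): for every normalized basic sequence `x`,
the image sequence `T ∘ x` fails to `S_ξ`-dominate `e`. -/
def MemWS (𝒮 : SchreierSystem) (ξ : Ordinal) {X Y E : Type*}
    [NormedAddCommGroup X] [NormedSpace ℝ X] [NormedAddCommGroup Y] [NormedSpace ℝ Y]
    [NormedAddCommGroup E] [NormedSpace ℝ E] (e : ℕ → E) (T : X →L[ℝ] Y) : Prop :=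
  ∀ x : ℕ → X, (∀ n, ‖x n‖ = 1) → IsBasicSeq x →
    ¬ SDominates 𝒮 ξ (fun n => T (x n)) e

/-- `T` is of class `JS_{e,ξ}`: for every normalized basic sequence `x` which is
dominated by `e`, the image sequence `T ∘ x` fails to `S_ξ`-dominate `e`. -/
def MemJS (𝒮 : SchreierSystem) (ξ : Ordinal) {X Y E : Type*}
    [NormedAddCommGroup X] [NormedSpace ℝ X] [NormedAddCommGroup Y] [NormedSpace ℝ Y]
    [NormedAddCommGroup E] [NormedSpace ℝ E] (e : ℕ → E) (T : X →L[ℝ] Y) : Prop :=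
  ∀ x : ℕ → X, (∀ n, ‖x n‖ = 1) → IsBasicSeq x → Dominates e x →
    ¬ SDominates 𝒮 ξ (fun n => T (x n)) e



lemma lt_iSup_nat {f : ℕ → Ordinal} {a : Ordinal} (h : a < ⨆ n, f n) : ∃ n, a < f n := by
  by_contra hc
  push_neg at hc
  exact absurd (Ordinal.iSup_le hc) (not_le.mpr h)


lemma add_lt_omega1' {a b : Ordinal} (ha : a < ω₁) (hb : b < ω₁) : a + b < ω₁ := by
  rw [← Cardinal.ord_aleph, Cardinal.lt_ord] at *
  rw [Ordinal.card_add]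
  exact Cardinal.add_lt_of_lt (Cardinal.aleph0_le_aleph 1) ha hb

namespace SchreierSystem
variable (𝒮 : SchreierSystem)

lemma empty_mem : ∀ ξ : Ordinal, ∅ ∈ 𝒮.S ξ := by
  intro ξ
  induction ξ using Ordinal.induction with
  | h ξ IH =>
    rcases le_or_gt ω₁ ξ with htop | hξ
    · rw [𝒮.top ξ htop]; trivial
    rcases Ordinal.zero_or_succ_or_isSuccLimit ξ with rfl | ⟨η, rfl⟩ | hlim
    · rw [𝒮.zero]; simp
    · have hη : η < ω₁ := lt_of_le_of_lt (Order.le_succ η) hξ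
      rw [← Ordinal.add_one_eq_succ, 𝒮.succ η hη]
      exact Or.inl rfl
    · obtain ⟨ζs, hmono, -, hsup, hdesc⟩ := 𝒮.limit ξ hlim hξ
      rw [hdesc]
      refine ⟨0, IH (ζs 0) ?_, by simp⟩
      calc ζs 0 < ζs 1 := hmono Nat.zero_lt_one
        _ ≤ ⨆ n, ζs n := Ordinal.le_iSup ζs 1
        _ = ξ := hsup

lemma mem_succ_of_mem {η : Ordinal} (hη : η < ω₁) {F : Finset ℕ} (hF : F ∈ 𝒮.S η)
    (hge : ∀ a ∈ F, 1 ≤ a) : F ∈ 𝒮.S (η + 1) := by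
  rw [𝒮.succ η hη]
  exact Or.inr ⟨1, fun _ => F, fun _ => hF, fun i j hij => absurd hij (by omega), hge, by simp⟩

lemma almost_mono : ∀ β : Ordinal, β < ω₁ → ∀ α : Ordinal, α < β →
    ∃ N : ℕ, ∀ F ∈ 𝒮.S α, (∀ a ∈ F, N ≤ a) → F ∈ 𝒮.S β := by
  intro β
  induction β using Ordinal.induction with
  | h β IH =>
    intro hβ α hα
    rcases Ordinal.zero_or_succ_or_isSuccLimit β with rfl | ⟨η, rfl⟩ | hlim
    · exact absurd hα (not_lt_zero' (a := α))
    · have hη : η < ω₁ := lt_of_le_of_lt (Order.le_succ η) hβ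
      have hηβ : η < Order.succ η := Order.lt_succ η
      rw [← Ordinal.add_one_eq_succ]
      rcases lt_or_eq_of_le (Order.le_of_lt_succ hα) with hαη | rfl
      · obtain ⟨N, hN⟩ := IH η hηβ hη α hαη
        refine ⟨max N 1, fun F hF hge => ?_⟩
        exact 𝒮.mem_succ_of_mem hη
          (hN F hF fun a ha => le_trans (le_max_left N 1) (hge a ha))
          (fun a ha => le_trans (le_max_right N 1) (hge a ha))
      · exact ⟨1, fun F hF hge => 𝒮.mem_succ_of_mem hη hF hge⟩
    · obtain ⟨ζs, hmono, -, hsup, hdesc⟩ := 𝒮.limit β hlim hβ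
      obtain ⟨n, hn⟩ := lt_iSup_nat (hsup ▸ hα)
      have hnβ : ζs n < β := by
        calc ζs n < ζs (n+1) := hmono (Nat.lt_succ_self n)
          _ ≤ ⨆ j, ζs j := Ordinal.le_iSup ζs (n+1)
          _ = β := hsup
      obtain ⟨N, hN⟩ := IH (ζs n) hnβ (lt_trans hnβ hβ) α hn
      refine ⟨max N (n+1), fun F hF hge => ?_⟩
      rw [hdesc]
      exact ⟨n, hN F hF fun a ha => le_trans (le_max_left _ _) (hge a ha),
        fun a ha => le_trans (le_max_right _ _) (hge a ha)⟩

lemma key : ∀ ζ : Ordinal, ζ < ω₁ → ∀ ξ : Ordinal, ξ < ω₁ →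
    ∃ h : ℕ → ℕ, ∀ G ∈ 𝒮.S ζ, ∀ F : ℕ → Finset ℕ,
      (∀ k ∈ G, F k ∈ 𝒮.S ξ) →
      (∀ k ∈ G, ∀ k' ∈ G, k < k' → ∀ a ∈ F k, ∀ b ∈ F k', a < b) →
      (∀ k ∈ G, ∀ a ∈ F k, h k ≤ a) → G.biUnion F ∈ 𝒮.S (ξ + ζ) := by
  intro ζ
  induction ζ using Ordinal.induction with
  | h ζ IH =>
    intro hζ ξ hξ
    rcases Ordinal.zero_or_succ_or_isSuccLimit ζ with rfl | ⟨η, rfl⟩ | hlim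
    · refine ⟨id, fun G hG F hF1 hF2 hF3 => ?_⟩
      rw [add_zero]
      rw [𝒮.zero] at hG
      rcases Finset.card_le_one_iff_subset_singleton.mp hG with ⟨k, hk⟩
      rcases Finset.subset_singleton_iff.mp hk with rfl | rfl
      · simpa using 𝒮.empty_mem ξ
      · rw [Finset.singleton_biUnion]
        exact hF1 k (Finset.mem_singleton_self k)
    · have hη : η < ω₁ := lt_of_le_of_lt (Order.le_succ η) hζ
      have hηζ : η < Order.succ η := Order.lt_succ η
      obtain ⟨h0, hh0⟩ := IH η hηζ hη ξ hξ
      refine ⟨fun k => max (h0 k) k, fun G hG F hF1 hF2 hF3 => ?_⟩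
      rw [← Ordinal.add_one_eq_succ] at hG ⊢
      rw [← add_assoc]
      rw [𝒮.succ η hη] at hG
      have hξη : ξ + η < ω₁ := add_lt_omega1' hξ hη
      rw [𝒮.succ (ξ + η) hξη]
      rcases hG with rfl | ⟨n, f, hf1, hf2, hf3, hfU⟩
      · exact Or.inl (by simp)
      have hsubG : ∀ i, f i ⊆ G := by
        intro i k hk
        rw [hfU]
        exact Finset.mem_biUnion.mpr ⟨i, Finset.mem_univ i, hk⟩
      refine Or.inr ⟨n, fun i => (f i).biUnion F, ?_, ?_, ?_, ?_⟩
      · intro i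
        refine hh0 (f i) (hf1 i) F (fun k hk => hF1 k (hsubG i hk))
          (fun k hk k' hk' => hF2 k (hsubG i hk) k' (hsubG i hk')) ?_
        intro k hk a ha
        exact le_trans (le_max_left _ _) (hF3 k (hsubG i hk) a ha)
      · intro i j hij a ha b hb
        obtain ⟨k, hk, hak⟩ := Finset.mem_biUnion.mp ha
        obtain ⟨k', hk', hbk'⟩ := Finset.mem_biUnion.mp hb
        exact hF2 k (hsubG i hk) k' (hsubG j hk') (hf2 i j hij k hk k' hk') a hak b hbk'
      · intro a ha
        obtain ⟨k, hk, hak⟩ := Finset.mem_biUnion.mp ha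
        calc n ≤ k := hf3 k hk
          _ ≤ max (h0 k) k := le_max_right _ _
          _ ≤ a := hF3 k hk a hak
      · rw [hfU, Finset.biUnion_biUnion]
    · obtain ⟨ζs, hmono, -, hsup, hdesc⟩ := 𝒮.limit ζ hlim hζ
      have hnζ : ∀ n, ζs n < ζ := by
        intro n
        calc ζs n < ζs (n+1) := hmono (Nat.lt_succ_self n)
          _ ≤ ⨆ j, ζs j := Ordinal.le_iSup ζs (n+1)
          _ = ζ := hsup
      have hsum : ∀ n, ξ + ζs n < ξ + ζ := fun n => by
        exact (add_lt_add_iff_left ξ).mpr (hnζ n)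
      have hξζ : ξ + ζ < ω₁ := add_lt_omega1' hξ hζ
      choose hs hhs using fun n => IH (ζs n) (hnζ n) (lt_trans (hnζ n) hζ) ξ hξ
      choose Nn hNn using fun n => 𝒮.almost_mono (ξ + ζ) hξζ (ξ + ζs n) (hsum n)
      refine ⟨fun k => max k ((Finset.range k).sup fun n => max (hs n k) (Nn n)),
        fun G hG F hF1 hF2 hF3 => ?_⟩
      rw [hdesc] at hG
      obtain ⟨n, hGn, hGge⟩ := hG
      have hmem : ∀ k ∈ G, n ∈ Finset.range k := by
        intro k hk
        exact Finset.mem_range.mpr (Nat.lt_of_lt_of_le (Nat.lt_succ_self n) (hGge k hk))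
      have hU : G.biUnion F ∈ 𝒮.S (ξ + ζs n) := by
        refine hhs n G hGn F hF1 hF2 ?_
        intro k hk a ha
        calc hs n k ≤ max (hs n k) (Nn n) := le_max_left _ _
          _ ≤ (Finset.range k).sup fun j => max (hs j k) (Nn j) :=
              Finset.le_sup (f := fun j => max (hs j k) (Nn j)) (hmem k hk)
          _ ≤ max k _ := le_max_right _ _
          _ ≤ a := hF3 k hk a ha
      refine hNn n (G.biUnion F) hU ?_
      intro a ha
      obtain ⟨k, hk, hak⟩ := Finset.mem_biUnion.mp ha
      calc Nn n ≤ max (hs n k) (Nn n) := le_max_right _ _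
        _ ≤ (Finset.range k).sup fun j => max (hs j k) (Nn j) := Finset.le_sup (f := fun j => max (hs j k) (Nn j)) (hmem k hk)
        _ ≤ max k _ := le_max_right _ _
        _ ≤ a := hF3 k hk a hak

lemma singleton_mem : ∀ ξ : Ordinal, ∀ k : ℕ, 1 ≤ k → ({k} : Finset ℕ) ∈ 𝒮.S ξ := by
  intro ξ
  induction ξ using Ordinal.induction with
  | h ξ IH =>
    intro k hk
    rcases le_or_gt ω₁ ξ with htop | hξ
    · rw [𝒮.top ξ htop]; trivial
    rcases Ordinal.zero_or_succ_or_isSuccLimit ξ with rfl | ⟨η, rfl⟩ | hlim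
    · rw [𝒮.zero]; simp
    · have hη : η < ω₁ := lt_of_le_of_lt (Order.le_succ η) hξ
      have hηξ : η < Order.succ η := Order.lt_succ η
      rw [← Ordinal.add_one_eq_succ, 𝒮.succ η hη]
      refine Or.inr ⟨1, fun _ => {k}, fun _ => IH η hηξ k hk, ?_, by simpa using hk, by simp⟩
      intro i j hij
      exact absurd hij (by omega)
    · obtain ⟨ζs, hmono, -, hsup, hdesc⟩ := 𝒮.limit ξ hlim hξ
      have h0 : ζs 0 < ξ := by
        calc ζs 0 < ζs 1 := hmono Nat.zero_lt_one
          _ ≤ ⨆ n, ζs n := Ordinal.le_iSup ζs 1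
          _ = ξ := hsup
      rw [hdesc]
      exact ⟨0, IH (ζs 0) h0 k hk, by simpa using hk⟩

lemma shift_mem : ∀ ξ : Ordinal, ∀ F ∈ 𝒮.S ξ, ∀ m : ℕ, F.image (· + m) ∈ 𝒮.S ξ := by
  intro ξ
  induction ξ using Ordinal.induction with
  | h ξ IH =>
    intro F hF m
    rcases le_or_gt ω₁ ξ with htop | hξ
    · rw [𝒮.top ξ htop]; trivial
    rcases Ordinal.zero_or_succ_or_isSuccLimit ξ with rfl | ⟨η, rfl⟩ | hlim
    · rw [𝒮.zero] at hF ⊢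
      exact le_trans (Finset.card_image_le) hF
    · have hη : η < ω₁ := lt_of_le_of_lt (Order.le_succ η) hξ
      have hηξ : η < Order.succ η := Order.lt_succ η
      rw [← Ordinal.add_one_eq_succ, 𝒮.succ η hη] at hF ⊢
      rcases hF with rfl | ⟨n, f, hf1, hf2, hf3, hfU⟩
      · exact Or.inl (by simp)
      refine Or.inr ⟨n, fun i => (f i).image (· + m), fun i => IH η hηξ (f i) (hf1 i) m,
        ?_, ?_, ?_⟩
      · intro i j hij a ha b hb
        simp only [Finset.mem_image] at ha hb
        obtain ⟨a0, ha0, rfl⟩ := ha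
        obtain ⟨b0, hb0, rfl⟩ := hb
        exact Nat.add_lt_add_right (hf2 i j hij a0 ha0 b0 hb0) m
      · intro a ha
        simp only [Finset.mem_image] at ha
        obtain ⟨a0, ha0, rfl⟩ := ha
        exact le_trans (hf3 a0 ha0) (Nat.le_add_right a0 m)
      · rw [hfU, Finset.biUnion_image]
    · obtain ⟨ζs, hmono, -, hsup, hdesc⟩ := 𝒮.limit ξ hlim hξ
      rw [hdesc] at hF ⊢
      obtain ⟨n, hFn, hFge⟩ := hF
      have hn : ζs n < ξ := by
        calc ζs n < ζs (n+1) := hmono (Nat.lt_succ_self n)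
          _ ≤ ⨆ j, ζs j := Ordinal.le_iSup ζs (n+1)
          _ = ξ := hsup
      refine ⟨n, IH (ζs n) hn F hFn m, ?_⟩
      intro a ha
      simp only [Finset.mem_image] at ha
      obtain ⟨a0, ha0, rfl⟩ := ha
      exact le_trans (hFge a0 ha0) (Nat.le_add_right a0 m)


end SchreierSystem


section Core

variable {E : Type*} [NormedAddCommGroup E] [NormedSpace ℝ E] {e : ℕ → E}
variable (hE : (∃ p : ℝ, 1 ≤ p ∧ IsLpBasis p e) ∨ IsC0Basis e)

section Pprops
include hE

lemma P1 (a : ℕ → ℝ) (F : Finset ℕ) (m : ℕ) :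
    ‖∑ n ∈ F.image (· + m), a (n - m) • e n‖ = ‖∑ n ∈ F, a n • e n‖ := by
  have hinj : ∀ x ∈ F, ∀ y ∈ F, x + m = y + m → x = y := by omega
  rcases hE with ⟨p, hp, hlp⟩ | hc0
  · rw [hlp, hlp]
    congr 1
    rw [Finset.sum_image hinj]
    simp
  · rw [hc0, hc0]
    congr 1
    rw [Finset.sup_image]
    apply Finset.sup_congr rfl
    intro n _
    simp [Function.comp]

lemma P2 (G : Finset ℕ) (F : ℕ → Finset ℕ) (r : ℕ → ℝ) (a : ℕ → ℕ → ℝ) (c : ℕ → ℝ)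
    (hdisj : (G : Set ℕ).PairwiseDisjoint F)
    (hnorm : ∀ k ∈ G, ‖∑ n ∈ F k, a k n • e n‖ = 1)
    (hc : ∀ k ∈ G, ∀ n ∈ F k, c n = r k * a k n) :
    ‖∑ n ∈ G.biUnion F, c n • e n‖ = ‖∑ k ∈ G, r k • e k‖ := by
  rcases hE with ⟨p, hp, hlp⟩ | hc0
  · have hp0 : p ≠ 0 := by positivity
    rw [hlp, hlp]
    congr 1
    rw [Finset.sum_biUnion hdisj]
    apply Finset.sum_congr rfl
    intro k hk
    have hsum1 : ∑ n ∈ F k, |a k n| ^ p = 1 := by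
      have h1 := hnorm k hk
      rw [hlp] at h1
      have hX : (0:ℝ) ≤ ∑ n ∈ F k, |a k n| ^ p :=
        Finset.sum_nonneg fun n _ => Real.rpow_nonneg (abs_nonneg _) p
      calc ∑ n ∈ F k, |a k n| ^ p
          = ((∑ n ∈ F k, |a k n| ^ p) ^ (1/p)) ^ p := by
            rw [← Real.rpow_mul hX, one_div_mul_cancel hp0, Real.rpow_one]
        _ = 1 ^ p := by rw [h1]
        _ = 1 := Real.one_rpow p
    calc ∑ n ∈ F k, |c n| ^ p
        = ∑ n ∈ F k, |r k| ^ p * |a k n| ^ p := by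
          apply Finset.sum_congr rfl
          intro n hn
          rw [hc k hk n hn, abs_mul, Real.mul_rpow (abs_nonneg _) (abs_nonneg _)]
      _ = |r k| ^ p * ∑ n ∈ F k, |a k n| ^ p := by rw [Finset.mul_sum]
      _ = |r k| ^ p := by rw [hsum1, mul_one]
  · rw [hc0, hc0]
    congr 1
    rw [Finset.sup_biUnion]
    apply Finset.sup_congr rfl
    intro k hk
    have hsup1 : ((F k).sup fun n => ‖a k n‖₊) = 1 := by
      have h1 := hnorm k hk
      rw [hc0] at h1
      exact_mod_cast h1
    calc ((F k).sup fun n => ‖c n‖₊)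
        = (F k).sup fun n => ‖r k‖₊ * ‖a k n‖₊ := by
          apply Finset.sup_congr rfl
          intro n hn
          rw [hc k hk n hn, nnnorm_mul]
      _ = ‖r k‖₊ * ((F k).sup fun n => ‖a k n‖₊) := by
          rw [NNReal.mul_finset_sup]
      _ = ‖r k‖₊ := by rw [hsup1, mul_one]

lemma P3 (r s : ℕ → ℝ) (G : Finset ℕ) (t : ℝ) (ht : 0 ≤ t)
    (h : ∀ k ∈ G, |r k| ≤ t * |s k|) :
    ‖∑ k ∈ G, r k • e k‖ ≤ t * ‖∑ k ∈ G, s k • e k‖ := by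
  rcases hE with ⟨p, hp, hlp⟩ | hc0
  · have hp0 : p ≠ 0 := by positivity
    have hppos : (0:ℝ) ≤ p := by linarith
    rw [hlp, hlp]
    have hXY : ∑ k ∈ G, |r k| ^ p ≤ t ^ p * ∑ k ∈ G, |s k| ^ p := by
      rw [Finset.mul_sum]
      apply Finset.sum_le_sum
      intro k hk
      calc |r k| ^ p ≤ (t * |s k|) ^ p :=
            Real.rpow_le_rpow (abs_nonneg _) (h k hk) hppos
        _ = t ^ p * |s k| ^ p := Real.mul_rpow ht (abs_nonneg _)
    have hX : (0:ℝ) ≤ ∑ k ∈ G, |r k| ^ p :=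
      Finset.sum_nonneg fun n _ => Real.rpow_nonneg (abs_nonneg _) p
    have hS : (0:ℝ) ≤ ∑ k ∈ G, |s k| ^ p :=
      Finset.sum_nonneg fun n _ => Real.rpow_nonneg (abs_nonneg _) p
    calc (∑ k ∈ G, |r k| ^ p) ^ (1/p)
        ≤ (t ^ p * ∑ k ∈ G, |s k| ^ p) ^ (1/p) :=
          Real.rpow_le_rpow hX hXY (by positivity)
      _ = (t ^ p) ^ (1/p) * (∑ k ∈ G, |s k| ^ p) ^ (1/p) :=
          Real.mul_rpow (by positivity) hS
      _ = t * (∑ k ∈ G, |s k| ^ p) ^ (1/p) := by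
          rw [← Real.rpow_mul ht, mul_one_div_cancel hp0, Real.rpow_one]
  · rw [hc0, hc0]
    have key : G.sup (fun k => ‖r k‖₊) ≤ t.toNNReal * G.sup (fun k => ‖s k‖₊) := by
      apply Finset.sup_le
      intro k hk
      calc ‖r k‖₊ ≤ t.toNNReal * ‖s k‖₊ := by
            rw [← NNReal.coe_le_coe]
            push_cast [Real.coe_toNNReal t ht]
            simpa [Real.norm_eq_abs] using h k hk
        _ ≤ t.toNNReal * G.sup (fun k => ‖s k‖₊) :=
            mul_le_mul_right (Finset.le_sup (f := fun k => ‖s k‖₊) hk) _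
    calc ((G.sup fun k => ‖r k‖₊ : NNReal) : ℝ)
        ≤ ((t.toNNReal * G.sup fun k => ‖s k‖₊ : NNReal) : ℝ) := by exact_mod_cast key
      _ = t * ((G.sup fun k => ‖s k‖₊ : NNReal) : ℝ) := by
          push_cast [Real.coe_toNNReal t ht]; ring

lemma P4 (b : ℕ → ℝ) (G : Finset ℕ) (k : ℕ) (hk : k ∈ G) :
    |b k| ≤ ‖∑ n ∈ G, b n • e n‖ := by
  rcases hE with ⟨p, hp, hlp⟩ | hc0
  · have hp0 : p ≠ 0 := by positivity
    rw [hlp]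
    calc |b k| = (|b k| ^ p) ^ (1/p) := by
          rw [← Real.rpow_mul (abs_nonneg _), mul_one_div_cancel hp0, Real.rpow_one]
      _ ≤ (∑ n ∈ G, |b n| ^ p) ^ (1/p) := by
          apply Real.rpow_le_rpow (Real.rpow_nonneg (abs_nonneg _) p)
          · exact Finset.single_le_sum
              (fun n _ => Real.rpow_nonneg (abs_nonneg _) p) hk
          · positivity
  · rw [hc0]
    calc |b k| = ((‖b k‖₊ : NNReal) : ℝ) := by simp [Real.norm_eq_abs]
      _ ≤ _ := by exact_mod_cast Finset.le_sup (f := fun n => ‖b n‖₊) hk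

section Core

variable {X Y : Type*} [NormedAddCommGroup X] [NormedSpace ℝ X]
  [NormedAddCommGroup Y] [NormedSpace ℝ Y]

omit hE in
lemma map_sum_smul (L : X →L[ℝ] Y) (z : ℕ → X) (c : ℕ → ℝ) (G : Finset ℕ) :
    L (∑ n ∈ G, c n • z n) = ∑ n ∈ G, c n • L (z n) := by
  rw [map_sum]
  simp

omit hE in
lemma smul_sum_eq {V : Type*} [AddCommMonoid V] [Module ℝ V] (ρ : ℝ) (a : ℕ → ℝ)
    (F : Finset ℕ) (z : ℕ → V) :
    ∑ n ∈ F, (ρ * a n) • z n = ρ • ∑ n ∈ F, a n • z n := by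
  rw [Finset.smul_sum]
  exact Finset.sum_congr rfl fun n _ => (smul_smul ρ (a n) (z n)).symm

omit hE in
lemma image_sum_eq {V : Type*} [AddCommMonoid V] [Module ℝ V] (m : ℕ) (a : ℕ → ℝ)
    (F : Finset ℕ) (z : ℕ → V) :
    ∑ n ∈ F.image (· + m), a (n - m) • z n = ∑ j ∈ F, a j • z (j + m) := by
  rw [Finset.sum_image (fun a _ b _ hab => by omega)]
  exact Finset.sum_congr rfl fun j _ => by simp

omit hE in
lemma geo_bound (G : Finset ℕ) : ∑ k ∈ G, ((1:ℝ)/2) ^ (k + 2) ≤ 1/2 := by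
  have h1 : G ⊆ Finset.range (G.sup id + 1) := fun k hk =>
    Finset.mem_range.mpr (Nat.lt_succ_of_le (Finset.le_sup (f := id) hk))
  calc ∑ k ∈ G, ((1:ℝ)/2) ^ (k + 2)
      ≤ ∑ k ∈ Finset.range (G.sup id + 1), ((1:ℝ)/2) ^ (k + 2) :=
        Finset.sum_le_sum_of_subset_of_nonneg h1 (fun k _ _ => by positivity)
    _ = (1/4) * ∑ k ∈ Finset.range (G.sup id + 1), ((1:ℝ)/2) ^ k := by
        rw [Finset.mul_sum]
        apply Finset.sum_congr rfl
        intro k _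
        ring
    _ ≤ (1/4) * 2 := by
        have := sum_geometric_two_le (G.sup id + 1)
        linarith
    _ = 1/2 := by norm_num

lemma core (𝒮 : SchreierSystem) (ξ' ζ' μ : Ordinal)
    (hsh : ∀ F ∈ 𝒮.S ξ', ∀ m : ℕ, F.image (· + m) ∈ 𝒮.S ξ')
    (hsing : ∀ k : ℕ, 1 ≤ k → ({k} : Finset ℕ) ∈ 𝒮.S ζ')
    (h : ℕ → ℕ) (hmono : Monotone h) (hid : ∀ k, k ≤ h k)
    (hcomb : ∀ G ∈ 𝒮.S ζ', ∀ F : ℕ → Finset ℕ,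
      (∀ k ∈ G, F k ∈ 𝒮.S ξ') →
      (∀ k ∈ G, ∀ k' ∈ G, k < k' → ∀ a ∈ F k, ∀ b ∈ F k', a < b) →
      (∀ k ∈ G, ∀ a ∈ F k, h k ≤ a) → G.biUnion F ∈ 𝒮.S μ)
    (S T : X →L[ℝ] Y) (hS : MemJS 𝒮 ξ' e S) (hT : MemJS 𝒮 ζ' e T)
    (x : ℕ → X) (hx1 : ∀ n, ‖x n‖ = 1) (hxb : IsBasicSeq x) (hxd : Dominates e x)
    (hdom : SDominates 𝒮 μ (fun n => (S + T) (x n)) e) : False := by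
  obtain ⟨hxne, K, hK1, hKG⟩ := hxb
  obtain ⟨D, hD0, hDle⟩ := hxd
  obtain ⟨C, hC1, hCdom⟩ := hdom
  have hC0 : (0:ℝ) < C := lt_of_lt_of_le one_pos hC1
  set W : ℝ := max ‖S + T‖ 1 with hWdef
  have hW0 : (0:ℝ) < W := lt_of_lt_of_le one_pos (le_max_right _ _)
  have hST_le : ‖S + T‖ ≤ W := le_max_left _ _
  set δ : ℝ := (C * W)⁻¹ with hδdef
  have hδ0 : (0:ℝ) < δ := by positivity
  set Ek : ℕ → ℝ := fun k => δ / (C * D) * (1/2) ^ (k + 2) with hEkdef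
  have hEk0 : ∀ k, 0 < Ek k := fun k => by positivity
  -- Step 1: tail extraction
  have step1 : ∀ m k : ℕ, ∃ aF : (ℕ → ℝ) × Finset ℕ,
      aF.2 ∈ 𝒮.S ξ' ∧ (∀ n ∈ aF.2, m ≤ n) ∧
      ‖∑ n ∈ aF.2, aF.1 n • e n‖ = 1 ∧ ‖∑ n ∈ aF.2, aF.1 n • S (x n)‖ < Ek k := by
    intro m k
    set xm : ℕ → X := fun n => x (n + m) with hxmdef
    have hxm1 : ∀ n, ‖xm n‖ = 1 := fun n => hx1 _
    have hxmb : IsBasicSeq xm := by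
      refine ⟨fun n => hxne _, K, hK1, ?_⟩
      intro a m' n' hmn
      set b : ℕ → ℝ := fun j => if m ≤ j then a (j - m) else 0 with hbdef
      have key : ∀ r : ℕ, ∑ i ∈ Finset.range r, a i • xm i
          = ∑ j ∈ Finset.range (m + r), b j • x j := by
        intro r
        rw [Finset.sum_range_add]
        have h0 : ∑ j ∈ Finset.range m, b j • x j = 0 := by
          apply Finset.sum_eq_zero
          intro j hj
          have hj2 := Finset.mem_range.mp hj
          have : ¬ m ≤ j := by omega
          simp [hbdef, this]
        rw [h0, zero_add]
        apply Finset.sum_congr rfl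
        intro i _
        have h1 : m ≤ m + i := by omega
        have h2 : m + i - m = i := by omega
        simp only [hbdef, if_pos h1, h2, hxmdef]
        rw [Nat.add_comm m i]
      calc ‖∑ i ∈ Finset.range m', a i • xm i‖
          = ‖∑ j ∈ Finset.range (m + m'), b j • x j‖ := by rw [key]
        _ ≤ K * ‖∑ j ∈ Finset.range (m + n'), b j • x j‖ := hKG b _ _ (by omega)
        _ = K * ‖∑ i ∈ Finset.range n', a i • xm i‖ := by rw [key]
    have hxmd : Dominates e xm := by
      refine ⟨D, hD0, ?_⟩
      intro a F
      calc ‖∑ n ∈ F, a n • xm n‖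
          = ‖∑ n ∈ F.image (· + m), a (n - m) • x n‖ := by rw [image_sum_eq m a F x]
        _ ≤ D * ‖∑ n ∈ F.image (· + m), a (n - m) • e n‖ := hDle _ _
        _ = D * ‖∑ n ∈ F, a n • e n‖ := by rw [P1 hE a F m]
    have hnd := hS xm hxm1 hxmb hxmd
    rw [SDominates] at hnd
    push_neg at hnd
    obtain ⟨a, F, hF, hlt⟩ := hnd (max 1 (Ek k)⁻¹) (le_max_left _ _)
    set C' : ℝ := max 1 (Ek k)⁻¹ with hC'def
    have hC'0 : (0:ℝ) < C' := lt_of_lt_of_le one_pos (le_max_left _ _)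
    set ρ : ℝ := ‖∑ n ∈ F, a n • e n‖ with hρdef
    have hρ0 : (0:ℝ) < ρ := lt_of_le_of_lt (by positivity) hlt
    set a' : ℕ → ℝ := fun n => ρ⁻¹ * a n with ha'def
    have hnorm' : ‖∑ n ∈ F, a' n • e n‖ = 1 := by
      simp only [ha'def]
      rw [smul_sum_eq ρ⁻¹ a F e, norm_smul, norm_inv, Real.norm_eq_abs, abs_of_pos hρ0,
        ← hρdef]
      exact inv_mul_cancel₀ (ne_of_gt hρ0)
    have hS' : ‖∑ n ∈ F, a' n • S (xm n)‖ < Ek k := by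
      have h2 : ‖∑ n ∈ F, a n • S (xm n)‖ < ρ / C' := by
        rw [lt_div_iff₀ hC'0]
        calc ‖∑ n ∈ F, a n • S (xm n)‖ * C'
            = C' * ‖∑ n ∈ F, a n • S (xm n)‖ := by ring
          _ < ρ := hlt
      have h3 : ρ / C' ≤ ρ * Ek k := by
        have h4 : (1:ℝ) ≤ Ek k * C' := by
          calc (1:ℝ) = Ek k * (Ek k)⁻¹ := by
                rw [mul_inv_cancel₀ (ne_of_gt (hEk0 k))]
            _ ≤ Ek k * C' := by
                apply mul_le_mul_of_nonneg_left (le_max_right _ _) (le_of_lt (hEk0 k))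
        rw [div_le_iff₀ hC'0, mul_assoc]
        nlinarith [hρ0.le]
      calc ‖∑ n ∈ F, a' n • S (xm n)‖
          = ρ⁻¹ * ‖∑ n ∈ F, a n • S (xm n)‖ := by
            simp only [ha'def]
            rw [smul_sum_eq ρ⁻¹ a F (fun n => S (xm n)), norm_smul, norm_inv,
              Real.norm_eq_abs, abs_of_pos hρ0]
        _ < ρ⁻¹ * (ρ * Ek k) := by
            apply mul_lt_mul_of_pos_left (lt_of_lt_of_le h2 h3) (by positivity)
        _ = Ek k := by field_simp
    refine ⟨⟨fun n => a' (n - m), F.image (· + m)⟩, hsh F hF m, ?_, ?_, ?_⟩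
    · intro n hn
      obtain ⟨j, _, rfl⟩ := Finset.mem_image.mp hn
      omega
    · exact (P1 hE a' F m).trans hnorm'
    · show ‖∑ n ∈ F.image (· + m), a' (n - m) • S (x n)‖ < Ek k
      rw [image_sum_eq m a' F (fun n => S (x n))]
      exact hS'
  -- Step 2: recursive block construction
  choose w hw using step1
  set g : ℕ → ℕ × ((ℕ → ℝ) × Finset ℕ) := fun k => Nat.rec
    ⟨h 1, w (h 1) 0⟩
    (fun k prev => ⟨max (h (k+2)) (prev.2.2.sup id + 1),
      w (max (h (k+2)) (prev.2.2.sup id + 1)) (k+1)⟩) k with hgdef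
  set mm : ℕ → ℕ := fun k => (g k).1 with hmmdef
  set aa : ℕ → ℕ → ℝ := fun k => (g k).2.1 with haadef
  set FF : ℕ → Finset ℕ := fun k => (g k).2.2 with hFFdef
  have hgw : ∀ k, (g k).2 = w (mm k) k := by
    intro k
    cases k with
    | zero => rfl
    | succ k => rfl
  have haaw : ∀ k, aa k = (w (mm k) k).1 := fun k => congrArg Prod.fst (hgw k)
  have hFFw : ∀ k, FF k = (w (mm k) k).2 := fun k => congrArg Prod.snd (hgw k)
  have hFS : ∀ k, FF k ∈ 𝒮.S ξ' := fun k => by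
    rw [hFFw k]; exact (hw (mm k) k).1
  have hFge : ∀ k, ∀ n ∈ FF k, mm k ≤ n := fun k => by
    rw [hFFw k]; exact (hw (mm k) k).2.1
  have hnorm1 : ∀ k, ‖∑ n ∈ FF k, aa k n • e n‖ = 1 := fun k => by
    rw [hFFw k, haaw k]; exact (hw (mm k) k).2.2.1
  have hsmall : ∀ k, ‖∑ n ∈ FF k, aa k n • S (x n)‖ < Ek k := fun k => by
    rw [hFFw k, haaw k]; exact (hw (mm k) k).2.2.2
  have hm1 : ∀ k, h (k+1) ≤ mm k := by
    intro k
    cases k with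
    | zero => exact Nat.le_of_eq rfl
    | succ k => exact le_max_left _ _
  have hsup_lt : ∀ k, ∀ n ∈ FF k, n < mm (k+1) := by
    intro k n hn
    have h2 : n ≤ (FF k).sup id := Finset.le_sup (f := id) hn
    have h3 : (FF k).sup id + 1 ≤ mm (k+1) := le_max_right _ _
    omega
  have hFne : ∀ k, (FF k).Nonempty := by
    intro k
    rw [Finset.nonempty_iff_ne_empty]
    intro hne
    have h2 := hnorm1 k
    rw [hne] at h2
    simp at h2
  have hmlt : ∀ k, mm k < mm (k+1) := by
    intro k
    obtain ⟨n, hn⟩ := hFne k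
    exact lt_of_le_of_lt (hFge k n hn) (hsup_lt k n hn)
  have hmmono : Monotone mm := (strictMono_nat_of_lt_succ hmlt).monotone
  have hsucc : ∀ k k', k < k' → ∀ a ∈ FF k, ∀ b ∈ FF k', a < b := by
    intro k k' hkk' a ha b hb
    calc a < mm (k+1) := hsup_lt k a ha
      _ ≤ mm k' := hmmono hkk'
      _ ≤ b := hFge k' b hb
  have hnotmem : ∀ k k' n, k ≠ k' → n ∈ FF k → n ∉ FF k' := by
    intro k k' n hne hn hn'
    rcases lt_or_gt_of_ne hne with h1 | h1
    · exact lt_irrefl n (hsucc k k' h1 n hn n hn')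
    · exact lt_irrefl n (hsucc k' k h1 n hn' n hn)
  have hdisj : ∀ (s : Set ℕ), s.PairwiseDisjoint FF := by
    intro s k _ k' _ hkk'
    simp only [Function.onFun]
    rw [Finset.disjoint_left]
    intro n hn hn'
    exact hnotmem k k' n hkk' hn hn'
  set u : ℕ → X := fun k => ∑ n ∈ FF k, aa k n • x n with hudef
  have huD : ∀ k, ‖u k‖ ≤ D := by
    intro k
    calc ‖u k‖ ≤ D * ‖∑ n ∈ FF k, aa k n • e n‖ := hDle _ _
      _ = D := by rw [hnorm1 k, mul_one]
  have hFμ : ∀ k, FF k ∈ 𝒮.S μ := by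
    intro k
    have h2 := hcomb {k+1} (hsing (k+1) (by omega)) (fun _ => FF k)
      (fun _ _ => hFS k)
      (fun k0 hk0 k1 hk1 hlt => absurd hlt (by
        rw [Finset.mem_singleton] at hk0 hk1; omega))
      (fun k0 hk0 a ha => by
        rw [Finset.mem_singleton] at hk0
        subst hk0
        exact le_trans (hm1 k) (hFge k a ha))
    rwa [Finset.singleton_biUnion] at h2
  have h1C : ∀ k, 1 ≤ C * ‖(S + T) (u k)‖ := by
    intro k
    have h2 := hCdom (aa k) (FF k) (hFμ k)
    rw [hnorm1 k] at h2
    calc (1:ℝ) ≤ C * ‖∑ n ∈ FF k, aa k n • (S + T) (x n)‖ := h2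
      _ = C * ‖(S + T) (u k)‖ := by
          simp only [hudef]
          rw [map_sum_smul]
  have huδ : ∀ k, δ ≤ ‖u k‖ := by
    intro k
    have h2 : 1 ≤ (C * W) * ‖u k‖ := by
      calc (1:ℝ) ≤ C * ‖(S + T) (u k)‖ := h1C k
        _ ≤ C * (‖S + T‖ * ‖u k‖) :=
            mul_le_mul_of_nonneg_left (ContinuousLinearMap.le_opNorm _ _) hC0.le
        _ ≤ C * (W * ‖u k‖) :=
            mul_le_mul_of_nonneg_left
              (mul_le_mul_of_nonneg_right hST_le (norm_nonneg _)) hC0.le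
        _ = (C * W) * ‖u k‖ := by ring
    rw [hδdef]
    calc (C*W)⁻¹ = (C*W)⁻¹ * 1 := (mul_one _).symm
      _ ≤ (C*W)⁻¹ * ((C*W) * ‖u k‖) := mul_le_mul_of_nonneg_left h2 (by positivity)
      _ = ‖u k‖ := by field_simp
  have hu0 : ∀ k, (0:ℝ) < ‖u k‖ := fun k => lt_of_lt_of_le hδ0 (huδ k)
  have huinv : ∀ k, ‖u k‖⁻¹ ≤ δ⁻¹ := fun k => (inv_le_inv₀ (hu0 k) hδ0).mpr (huδ k)
  set y : ℕ → X := fun k => ‖u k‖⁻¹ • u k with hydef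
  have hy1 : ∀ k, ‖y k‖ = 1 := by
    intro k
    simp only [hydef]
    rw [norm_smul, norm_inv, norm_norm]
    exact inv_mul_cancel₀ (ne_of_gt (hu0 k))
  have hSy : ∀ k, ‖S (y k)‖ ≤ δ⁻¹ * Ek k := by
    intro k
    have h2 : ‖S (u k)‖ ≤ Ek k := by
      calc ‖S (u k)‖ = ‖∑ n ∈ FF k, aa k n • S (x n)‖ := by
            simp only [hudef]; rw [map_sum_smul]
        _ ≤ Ek k := le_of_lt (hsmall k)
    calc ‖S (y k)‖ = ‖u k‖⁻¹ * ‖S (u k)‖ := by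
          simp only [hydef]
          rw [map_smul, norm_smul, norm_inv, norm_norm]
      _ ≤ δ⁻¹ * Ek k :=
          mul_le_mul (huinv k) h2 (norm_nonneg _) (by positivity)
  set cc : (ℕ → ℝ) → Finset ℕ → ℕ → ℝ := fun b G n =>
    ∑ k ∈ G, (b k * ‖u k‖⁻¹) * (if n ∈ FF k then aa k n else 0) with hccdef
  have hccF : ∀ b (G : Finset ℕ) k, k ∈ G → ∀ n ∈ FF k,
      cc b G n = (b k * ‖u k‖⁻¹) * aa k n := by
    intro b G k hk n hn
    simp only [hccdef]
    rw [Finset.sum_eq_single_of_mem k hk]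
    · rw [if_pos hn]
    · intro k' _ hne
      rw [if_neg (hnotmem k k' n (Ne.symm hne) hn), mul_zero]
  have hid1 : ∀ b (G : Finset ℕ),
      ∑ n ∈ G.biUnion FF, cc b G n • x n = ∑ k ∈ G, b k • y k := by
    intro b G
    rw [Finset.sum_biUnion (hdisj ↑G)]
    apply Finset.sum_congr rfl
    intro k hk
    calc ∑ n ∈ FF k, cc b G n • x n
        = ∑ n ∈ FF k, ((b k * ‖u k‖⁻¹) * aa k n) • x n :=
          Finset.sum_congr rfl fun n hn => by rw [hccF b G k hk n hn]
      _ = (b k * ‖u k‖⁻¹) • ∑ n ∈ FF k, aa k n • x n := smul_sum_eq _ _ _ x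
      _ = b k • y k := by
          rw [mul_smul]
  have hiltj : ∀ i j, j ∈ FF i → i < j := by
    intro i j hj
    have h2 : i + 1 ≤ h (i+1) := hid (i+1)
    have h3 := le_trans (hm1 i) (hFge i j hj)
    omega
  have hFsub : ∀ i r, i < r → FF i ⊆ Finset.range (mm r) := by
    intro i r hir n hn
    exact Finset.mem_range.mpr (lt_of_lt_of_le (hsup_lt i n hn) (hmmono hir))
  set c'' : (ℕ → ℝ) → ℕ → ℝ := fun b j => cc b (Finset.range (j+1)) j with hc''def
  have hkey : ∀ b (r : ℕ),
      ∑ j ∈ Finset.range (mm r), c'' b j • x j = ∑ i ∈ Finset.range r, b i • y i := by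
    intro b r
    have hsub : (Finset.range r).biUnion FF ⊆ Finset.range (mm r) := by
      intro j hj
      obtain ⟨i, hi, hji⟩ := Finset.mem_biUnion.mp hj
      exact hFsub i r (Finset.mem_range.mp hi) hji
    have h4 : ∑ j ∈ Finset.range (mm r), c'' b j • x j
        = ∑ j ∈ (Finset.range r).biUnion FF, c'' b j • x j := by
      symm
      apply Finset.sum_subset hsub
      intro j hjr hjU
      have hzero : c'' b j = 0 := by
        simp only [hc''def, hccdef]
        apply Finset.sum_eq_zero
        intro k _
        rcases Finset.decidableMem j (FF k) with hk | hk
        · rw [if_neg hk, mul_zero]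
        · exfalso
          apply hjU
          have hkr : k < r := by
            by_contra hge
            have h5 : mm r ≤ mm k := hmmono (by omega)
            have h6 := hFge k j hk
            have h7 := Finset.mem_range.mp hjr
            omega
          exact Finset.mem_biUnion.mpr ⟨k, Finset.mem_range.mpr hkr, hk⟩
      rw [hzero, zero_smul]
    rw [h4, ← hid1 b (Finset.range r)]
    apply Finset.sum_congr rfl
    intro j hj
    obtain ⟨i, hi, hji⟩ := Finset.mem_biUnion.mp hj
    have h5 : c'' b j = cc b (Finset.range r) j := by
      show cc b (Finset.range (j+1)) j = cc b (Finset.range r) j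
      rw [hccF b (Finset.range (j+1)) i (Finset.mem_range.mpr (by
        exact Nat.lt_succ_of_lt (hiltj i j hji))) j hji]
      rw [hccF b (Finset.range r) i hi j hji]
    rw [h5]
  have hyb : IsBasicSeq y := by
    refine ⟨fun k => ?_, K, hK1, ?_⟩
    · intro h0
      have h2 := hy1 k
      rw [h0, norm_zero] at h2
      norm_num at h2
    · intro b m' n' hmn
      rw [← hkey b m', ← hkey b n']
      exact hKG (c'' b) (mm m') (mm n') (hmmono hmn)
  have ydom : Dominates e y := by
    refine ⟨D * δ⁻¹, by positivity, ?_⟩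
    intro b G
    calc ‖∑ n ∈ G, b n • y n‖
        = ‖∑ n ∈ G.biUnion FF, cc b G n • x n‖ := by rw [hid1]
      _ ≤ D * ‖∑ n ∈ G.biUnion FF, cc b G n • e n‖ := hDle _ _
      _ = D * ‖∑ k ∈ G, (b k * ‖u k‖⁻¹) • e k‖ := by
          rw [P2 hE G FF (fun k => b k * ‖u k‖⁻¹) aa (cc b G) (hdisj ↑G)
            (fun k _ => hnorm1 k) (hccF b G)]
      _ ≤ D * (δ⁻¹ * ‖∑ k ∈ G, b k • e k‖) := by
          apply mul_le_mul_of_nonneg_left _ hD0.le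
          apply P3 hE _ b G δ⁻¹ (by positivity)
          intro k _
          rw [abs_mul, abs_of_pos (inv_pos.mpr (hu0 k)), mul_comm]
          exact mul_le_mul_of_nonneg_right (huinv k) (abs_nonneg _)
      _ = (D * δ⁻¹) * ‖∑ n ∈ G, b n • e n‖ := by ring
  -- Step 3: conclude
  refine hT y hy1 hyb ydom ⟨max 1 (2*(C*D)), le_max_left _ _, ?_⟩
  intro b G hG
  set B : ℝ := ‖∑ k ∈ G, b k • e k‖ with hBdef
  have hB0 : 0 ≤ B := norm_nonneg _
  have hUμ : G.biUnion FF ∈ 𝒮.S μ :=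
    hcomb G hG FF (fun k _ => hFS k) (fun k _ k' _ hkk' => hsucc k k' hkk')
      (fun k _ a ha =>
        le_trans (le_trans (hmono (Nat.le_succ k)) (hm1 k)) (hFge k a ha))
  have hB1 : B ≤ D * ‖∑ n ∈ G.biUnion FF, cc b G n • e n‖ := by
    rw [P2 hE G FF (fun k => b k * ‖u k‖⁻¹) aa (cc b G) (hdisj ↑G)
      (fun k _ => hnorm1 k) (hccF b G)]
    apply P3 hE b _ G D hD0.le
    intro k _
    have h9 : |b k| = (|b k| * ‖u k‖) * ‖u k‖⁻¹ := by
      rw [mul_assoc, mul_inv_cancel₀ (ne_of_gt (hu0 k)), mul_one]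
    calc |b k| = (|b k| * ‖u k‖) * ‖u k‖⁻¹ := h9
      _ ≤ (|b k| * D) * ‖u k‖⁻¹ := by
          apply mul_le_mul_of_nonneg_right
            (mul_le_mul_of_nonneg_left (huD k) (abs_nonneg _))
            (inv_nonneg.mpr (norm_nonneg _))
      _ = D * |b k * ‖u k‖⁻¹| := by
          rw [abs_mul, abs_of_pos (inv_pos.mpr (hu0 k))]
          ring
  have hB2 : ‖∑ n ∈ G.biUnion FF, cc b G n • e n‖
      ≤ C * ‖∑ n ∈ G.biUnion FF, cc b G n • (S + T) (x n)‖ :=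
    hCdom (cc b G) (G.biUnion FF) hUμ
  have hB3 : ∑ n ∈ G.biUnion FF, cc b G n • (S + T) (x n)
      = (∑ k ∈ G, b k • S (y k)) + (∑ k ∈ G, b k • T (y k)) := by
    rw [← map_sum_smul (S + T) x (cc b G) (G.biUnion FF), hid1 b G]
    rw [map_sum (S + T) _ G]
    rw [← Finset.sum_add_distrib]
    apply Finset.sum_congr rfl
    intro k _
    rw [ContinuousLinearMap.map_smul, ContinuousLinearMap.add_apply, smul_add]
  have hB4 : ‖∑ k ∈ G, b k • S (y k)‖ ≤ B / (2*(C*D)) := by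
    have hbB : ∀ k ∈ G, |b k| ≤ B := fun k hk => P4 hE b G k hk
    calc ‖∑ k ∈ G, b k • S (y k)‖
        ≤ ∑ k ∈ G, ‖b k • S (y k)‖ := norm_sum_le _ _
      _ = ∑ k ∈ G, |b k| * ‖S (y k)‖ := by
          apply Finset.sum_congr rfl
          intro k _
          rw [norm_smul, Real.norm_eq_abs]
      _ ≤ ∑ k ∈ G, B * (δ⁻¹ * (δ / (C*D) * (1/2)^(k+2))) := by
          apply Finset.sum_le_sum
          intro k hk
          exact mul_le_mul (hbB k hk) (hSy k) (norm_nonneg _) hB0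
      _ = (B * δ⁻¹ * (δ / (C*D))) * ∑ k ∈ G, ((1:ℝ)/2)^(k+2) := by
          rw [Finset.mul_sum]
          apply Finset.sum_congr rfl
          intro k _
          ring
      _ ≤ (B * δ⁻¹ * (δ / (C*D))) * (1/2) := by
          apply mul_le_mul_of_nonneg_left (geo_bound G) (by positivity)
      _ = B / (2*(C*D)) := by
          have h9 : B * δ⁻¹ * (δ / (C*D)) * (1/2) = (B * (δ⁻¹ * δ)) / (2*(C*D)) := by
            ring
          rw [h9, inv_mul_cancel₀ (ne_of_gt hδ0), mul_one]
  have hTY0 : (0:ℝ) ≤ ‖∑ k ∈ G, b k • T (y k)‖ := norm_nonneg _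
  have hhalf : D * C * (B / (2*(C*D))) = B / 2 := by
    field_simp
  have hchain : B ≤ D * C * ‖∑ k ∈ G, b k • T (y k)‖ + B / 2 := by
    calc B ≤ D * ‖∑ n ∈ G.biUnion FF, cc b G n • e n‖ := hB1
      _ ≤ D * (C * ‖∑ n ∈ G.biUnion FF, cc b G n • (S + T) (x n)‖) :=
          mul_le_mul_of_nonneg_left hB2 hD0.le
      _ = D * C * ‖(∑ k ∈ G, b k • S (y k)) + (∑ k ∈ G, b k • T (y k))‖ := by
          rw [hB3]; ring
      _ ≤ D * C * (‖∑ k ∈ G, b k • T (y k)‖ + ‖∑ k ∈ G, b k • S (y k)‖) := by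
          apply mul_le_mul_of_nonneg_left _ (by positivity)
          rw [add_comm (∑ k ∈ G, b k • S (y k))]
          exact norm_add_le _ _
      _ ≤ D * C * (‖∑ k ∈ G, b k • T (y k)‖ + B / (2*(C*D))) := by
          apply mul_le_mul_of_nonneg_left _ (by positivity)
          linarith [hB4]
      _ = D * C * ‖∑ k ∈ G, b k • T (y k)‖ + B / 2 := by
          rw [mul_add, hhalf]
  have hfin : B ≤ 2*(C*D) * ‖∑ k ∈ G, b k • T (y k)‖ := by nlinarith
  calc ‖∑ n ∈ G, b n • e n‖ = B := rfl
    _ ≤ 2*(C*D) * ‖∑ k ∈ G, b k • T (y k)‖ := hfin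
    _ ≤ max 1 (2*(C*D)) * ‖∑ n ∈ G, b n • T (y n)‖ :=
        mul_le_mul_of_nonneg_right (le_max_right _ _) hTY0



end Core

end Pprops

end Core

/-- Let `e` be the canonical basis of `ℓ_p` (`1 ≤ p < ∞`) or `c₀`.
If `S ∈ JS_{e,ξ}(X,Y)` and `T ∈ JS_{e,ζ}(X,Y)` for countable ordinals `1 ≤ ξ, ζ < ω₁`,
then `S + T ∈ JS_{e,ξ+ζ}(X,Y)`.  Moreover, if `ξ = ω₁` or `ζ = ω₁` then
`S + T ∈ JS_{e,ω₁}(X,Y)`. -/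
theorem stmt15 (𝒮 : SchreierSystem) {X Y E : Type*}
    [NormedAddCommGroup X] [NormedSpace ℝ X] [CompleteSpace X]
    [NormedAddCommGroup Y] [NormedSpace ℝ Y] [CompleteSpace Y]
    [NormedAddCommGroup E] [NormedSpace ℝ E] [CompleteSpace E]
    (e : ℕ → E) (hE : (∃ p : ℝ, 1 ≤ p ∧ IsLpBasis p e) ∨ IsC0Basis e) :
    (∀ ξ ζ : Ordinal, 1 ≤ ξ → ξ < ω₁ → 1 ≤ ζ → ζ < ω₁ →
      ∀ S T : X →L[ℝ] Y, MemJS 𝒮 ξ e S → MemJS 𝒮 ζ e T →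
        MemJS 𝒮 (ξ + ζ) e (S + T)) ∧
    (∀ ξ ζ : Ordinal, 1 ≤ ξ → ξ ≤ ω₁ → 1 ≤ ζ → ζ ≤ ω₁ → (ξ = ω₁ ∨ ζ = ω₁) →
      ∀ S T : X →L[ℝ] Y, MemJS 𝒮 ξ e S → MemJS 𝒮 ζ e T →
        MemJS 𝒮 ω₁ e (S + T)) := by
  constructor
  · intro ξ ζ hξ1 hξω hζ1 hζω S T hS hT x hx1 hxb hxd hdom
    obtain ⟨h0, hh0⟩ := 𝒮.key ζ hζω ξ hξω
    set H : ℕ → ℕ := fun k => k + (Finset.range (k+1)).sup h0 with hHdef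
    have hHmono : Monotone H := by
      intro a b hab
      exact Nat.add_le_add hab
        (Finset.sup_mono (Finset.range_subset_range.mpr (by omega)))
    have hHid : ∀ k, k ≤ H k := fun k => Nat.le_add_right _ _
    have hHh0 : ∀ k, h0 k ≤ H k := fun k =>
      le_trans (Finset.le_sup (Finset.mem_range.mpr (Nat.lt_succ_self k)))
        (Nat.le_add_left _ _)
    refine core (e := e) hE 𝒮 ξ ζ (ξ + ζ)
      (fun F hF m => 𝒮.shift_mem ξ F hF m)
      (fun k hk => 𝒮.singleton_mem ζ k hk)
      H hHmono hHid ?_ S T hS hT x hx1 hxb hxd hdom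
    intro G hG F h1 h2 h3
    exact hh0 G hG F h1 h2 (fun k hk a ha => le_trans (hHh0 k) (h3 k hk a ha))
  · intro ξ ζ hξ1 hξω hζ1 hζω hor S T hS hT x hx1 hxb hxd hdom
    have htop : 𝒮.S ω₁ = Set.univ := 𝒮.top ω₁ le_rfl
    rcases hor with rfl | rfl
    · refine core (e := e) hE 𝒮 ω₁ ζ ω₁
        (fun F hF m => 𝒮.shift_mem ω₁ F hF m)
        (fun k hk => 𝒮.singleton_mem ζ k hk)
        id monotone_id (fun k => le_rfl) ?_ S T hS hT x hx1 hxb hxd hdom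
      intro G _ F _ _ _
      rw [htop]
      trivial
    · refine core (e := e) hE 𝒮 ξ ω₁ ω₁
        (fun F hF m => 𝒮.shift_mem ξ F hF m)
        (fun k hk => 𝒮.singleton_mem ω₁ k hk)
        id monotone_id (fun k => le_rfl) ?_ S T hS hT x hx1 hxb hxd hdom
      intro G _ F _ _ _
      rw [htop]
      trivial
end

section
/- Let X and Y be Banach spaces and let Z be a Banach space containing complemented copies of X and Y. For each closed subideal I of L(X,Y), define Ψ(I) to be the closed linear span in L(Z) of all operators of the form B T A where T ∈ I, A ∈ L(Z,X), B ∈ L(Y,Z). Then Ψ is an order-preserving injection from the set of closed subideals of L(X,Y) into the set of closed ideals of L(Z): I ⊆ J if and only if Ψ(I) ⊆ Ψ(J). -/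
/-- `I` is a closed subideal of `L(X,Y)`: a norm-closed linear subspace with
`B ∘ T ∘ A ∈ I` for all `T ∈ I`, `A ∈ L(X)`, `B ∈ L(Y)`. -/
def IsClosedSubideal {X Y : Type*}
    [NormedAddCommGroup X] [NormedSpace ℝ X] [NormedAddCommGroup Y] [NormedSpace ℝ Y]
    (I : Set (X →L[ℝ] Y)) : Prop :=
  IsClosed I ∧ (0 : X →L[ℝ] Y) ∈ I ∧
    (∀ S ∈ I, ∀ T ∈ I, S + T ∈ I) ∧ (∀ c : ℝ, ∀ T ∈ I, c • T ∈ I) ∧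
    ∀ T ∈ I, ∀ (A : X →L[ℝ] X) (B : Y →L[ℝ] Y), B.comp (T.comp A) ∈ I

/-- `Ψ(I)`: the closed linear span in `L(Z)` of all operators factoring as `B ∘ T ∘ A`
with `T ∈ I`, `A ∈ L(Z,X)`, `B ∈ L(Y,Z)`. -/
def Psi {X Y Z : Type*}
    [NormedAddCommGroup X] [NormedSpace ℝ X] [NormedAddCommGroup Y] [NormedSpace ℝ Y]
    [NormedAddCommGroup Z] [NormedSpace ℝ Z]
    (I : Set (X →L[ℝ] Y)) : Set (Z →L[ℝ] Z) :=
  closure (Submodule.span ℝ {W : Z →L[ℝ] Z |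
    ∃ T ∈ I, ∃ (A : Z →L[ℝ] X) (B : Y →L[ℝ] Z), W = B.comp (T.comp A)} : Set (Z →L[ℝ] Z))

/-- Two-sided conjugation `T ↦ B ∘ T ∘ A` as a continuous linear map. -/
noncomputable def conjCLM {X Y X' Y' : Type*}
    [NormedAddCommGroup X] [NormedSpace ℝ X] [NormedAddCommGroup Y] [NormedSpace ℝ Y]
    [NormedAddCommGroup X'] [NormedSpace ℝ X'] [NormedAddCommGroup Y'] [NormedSpace ℝ Y']
    (A : X' →L[ℝ] X) (B : Y →L[ℝ] Y') : (X →L[ℝ] Y) →L[ℝ] (X' →L[ℝ] Y') :=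
  (ContinuousLinearMap.compL ℝ X' Y Y' B).comp
    ((ContinuousLinearMap.compL ℝ X' X Y).flip A)

lemma conjCLM_apply {X Y X' Y' : Type*}
    [NormedAddCommGroup X] [NormedSpace ℝ X] [NormedAddCommGroup Y] [NormedSpace ℝ Y]
    [NormedAddCommGroup X'] [NormedSpace ℝ X'] [NormedAddCommGroup Y'] [NormedSpace ℝ Y']
    (A : X' →L[ℝ] X) (B : Y →L[ℝ] Y') (T : X →L[ℝ] Y) :
    conjCLM A B T = B.comp (T.comp A) := rfl

/-- Let `X`, `Y` be Banach spaces and `Z` a Banach space containing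
complemented copies of `X` and `Y`.  Then `Ψ` maps each closed subideal of `L(X,Y)`
to a closed ideal of `L(Z)`, and is an order-preserving injection:
`I ⊆ J ↔ Ψ(I) ⊆ Ψ(J)`. -/
theorem stmt16 {X Y Z : Type*}
    [NormedAddCommGroup X] [NormedSpace ℝ X] [CompleteSpace X]
    [NormedAddCommGroup Y] [NormedSpace ℝ Y] [CompleteSpace Y]
    [NormedAddCommGroup Z] [NormedSpace ℝ Z] [CompleteSpace Z]
    (JX : X →L[ℝ] Z) (QX : Z →L[ℝ] X) (hX : QX.comp JX = ContinuousLinearMap.id ℝ X)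
    (JY : Y →L[ℝ] Z) (QY : Z →L[ℝ] Y) (hY : QY.comp JY = ContinuousLinearMap.id ℝ Y)
    (I J : Set (X →L[ℝ] Y)) (hI : IsClosedSubideal I) (hJ : IsClosedSubideal J) :
    IsClosedSubideal (Psi (Z := Z) I) ∧ (I ⊆ J ↔ Psi (Z := Z) I ⊆ Psi (Z := Z) J) := by
  -- the generating set of `Psi K`
  set SI : Set (Z →L[ℝ] Z) := {W : Z →L[ℝ] Z |
    ∃ T ∈ I, ∃ (A : Z →L[ℝ] X) (B : Y →L[ℝ] Z), W = B.comp (T.comp A)} with hSI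
  set SJ : Set (Z →L[ℝ] Z) := {W : Z →L[ℝ] Z |
    ∃ T ∈ J, ∃ (A : Z →L[ℝ] X) (B : Y →L[ℝ] Z), W = B.comp (T.comp A)} with hSJ
  have hPsiI : Psi (Z := Z) I = closure (Submodule.span ℝ SI : Set (Z →L[ℝ] Z)) := rfl
  have hPsiJ : Psi (Z := Z) J = closure (Submodule.span ℝ SJ : Set (Z →L[ℝ] Z)) := rfl
  -- Psi I is a closed subideal
  have key : ∀ x : Z →L[ℝ] Z,
      x ∈ Psi (Z := Z) I ↔ x ∈ (Submodule.span ℝ SI).topologicalClosure := by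
    intro x
    rw [hPsiI, ← Submodule.topologicalClosure_coe]
    exact Iff.rfl
  have hideal : IsClosedSubideal (Psi (Z := Z) I) := by
    refine ⟨isClosed_closure, subset_closure (Submodule.zero_mem _), ?_, ?_, ?_⟩
    · intro S hS T hT
      rw [key]
      exact (Submodule.span ℝ SI).topologicalClosure.add_mem
        ((key S).mp hS) ((key T).mp hT)
    · intro c T hT
      rw [key]
      exact (Submodule.span ℝ SI).topologicalClosure.smul_mem c ((key T).mp hT)
    · intro W hW A B
      rw [show B.comp (W.comp A) = conjCLM A B W from rfl]
      have hmaps : Set.MapsTo (conjCLM A B) (Submodule.span ℝ SI : Set (Z →L[ℝ] Z))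
          (Submodule.span ℝ SI : Set (Z →L[ℝ] Z)) := by
        intro V hV
        have hle : Submodule.span ℝ SI ≤
            Submodule.comap (conjCLM A B : (Z →L[ℝ] Z) →ₗ[ℝ] (Z →L[ℝ] Z))
              (Submodule.span ℝ SI) := by
          rw [Submodule.span_le]
          rintro _ ⟨T, hT, A', B', rfl⟩
          refine Submodule.subset_span ?_
          refine ⟨T, hT, A'.comp A, B.comp B', ?_⟩
          simp only [Submodule.mem_comap, ContinuousLinearMap.coe_coe, conjCLM_apply]
          ext z
          simp [ContinuousLinearMap.comp_apply]
        exact hle hV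
      exact map_mem_closure (conjCLM A B).continuous hW hmaps
  refine ⟨hideal, ?_, ?_⟩
  · -- monotone
    intro hIJ
    rw [hPsiI, hPsiJ]
    exact closure_mono (Submodule.span_mono (by
      rintro _ ⟨T, hT, A, B, rfl⟩; exact ⟨T, hIJ hT, A, B, rfl⟩))
  · -- injective on order
    intro hPsi T hT
    -- extraction map Φ W = QY ∘ W ∘ JX
    set Φ : (Z →L[ℝ] Z) →L[ℝ] (X →L[ℝ] Y) := conjCLM JX QY with hΦ
    have hW : JY.comp (T.comp QX) ∈ Psi (Z := Z) J := by
      apply hPsi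
      exact subset_closure (Submodule.subset_span ⟨T, hT, QX, JY, rfl⟩)
    have hmaps : Set.MapsTo Φ (Submodule.span ℝ SJ : Set (Z →L[ℝ] Z)) J := by
      intro V hV
      -- J as a submodule
      let pJ : Submodule ℝ (X →L[ℝ] Y) :=
        { carrier := J
          add_mem' := fun ha hb => hJ.2.2.1 _ ha _ hb
          zero_mem' := hJ.2.1
          smul_mem' := fun c _ h => hJ.2.2.2.1 c _ h }
      have hle : Submodule.span ℝ SJ ≤
          Submodule.comap (Φ : (Z →L[ℝ] Z) →ₗ[ℝ] (X →L[ℝ] Y)) pJ := by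
        rw [Submodule.span_le]
        rintro _ ⟨S, hS, A, B, rfl⟩
        have : Φ (B.comp (S.comp A)) =
            (QY.comp B).comp (S.comp (A.comp JX)) := by
          rw [hΦ, conjCLM_apply]; ext x; simp
        show Φ (B.comp (S.comp A)) ∈ J
        rw [this]
        exact hJ.2.2.2.2 S hS (A.comp JX) (QY.comp B)
      exact hle hV
    have hmem : Φ (JY.comp (T.comp QX)) ∈ closure J :=
      map_mem_closure Φ.continuous hW hmaps
    rw [hJ.1.closure_eq] at hmem
    have heq : Φ (JY.comp (T.comp QX)) = T := by
      rw [hΦ, conjCLM_apply]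
      ext x
      have h1 : QX (JX x) = x := DFunLike.congr_fun hX x
      have h2 : ∀ y, QY (JY y) = y := fun y => DFunLike.congr_fun hY y
      simp [h1, h2]
    rwa [heq] at hmem
end

section
/- Let 1 ≤ p ≤ q < ∞ and let e = (e_n) be the canonical basis of ℓ_p. Then every normalized basic sequence in ℓ_q admits a subsequence that is dominated by (e_n); consequently, for every Banach space Y and every 1 ≤ ξ ≤ ω₁, JS_{e,ξ}(ℓ_q, Y) = WS_{e,ξ}(ℓ_q, Y). -/
open Ordinal Filter Topology

open Finset in
lemma sum_rpow_le_rpow_sum' {r : ℝ} (hr0 : 0 < r) (hr1 : r ≤ 1) (s : Finset ℕ) (f : ℕ → ℝ)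
    (hf : ∀ i, 0 ≤ f i) : (∑ i ∈ s, f i) ^ r ≤ ∑ i ∈ s, f i ^ r := by
  classical
  induction s using Finset.induction with
  | empty => simp [Real.zero_rpow hr0.ne']
  | insert a s h ih =>
    rw [Finset.sum_insert h, Finset.sum_insert h]
    calc (f a + ∑ i ∈ s, f i) ^ r ≤ f a ^ r + (∑ i ∈ s, f i) ^ r := by
          have := NNReal.rpow_add_le_add_rpow (⟨f a, hf a⟩ : NNReal)
            (⟨∑ i ∈ s, f i, Finset.sum_nonneg fun i _ => hf i⟩ : NNReal) hr0.le hr1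
          have h2 := NNReal.coe_le_coe.2 this
          push_cast at h2
          convert h2 using 2 <;>
            rfl
      _ ≤ f a ^ r + ∑ i ∈ s, f i ^ r := by linarith

lemma lq_le_lp_sum {p q : ℝ} (hp : 1 ≤ p) (hpq : p ≤ q) (s : Finset ℕ) (a : ℕ → ℝ) :
    (∑ i ∈ s, |a i| ^ q) ^ (1/q) ≤ (∑ i ∈ s, |a i| ^ p) ^ (1/p) := by
  have hp0 : 0 < p := lt_of_lt_of_le one_pos hp
  have hq0 : 0 < q := lt_of_lt_of_le hp0 hpq
  have hr0 : 0 < p / q := div_pos hp0 hq0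
  have hr1 : p / q ≤ 1 := (div_le_one hq0).2 hpq
  have key : (∑ i ∈ s, |a i| ^ q) ^ (p/q) ≤ ∑ i ∈ s, |a i| ^ p := by
    calc (∑ i ∈ s, |a i| ^ q) ^ (p/q)
        ≤ ∑ i ∈ s, (|a i| ^ q) ^ (p/q) :=
          sum_rpow_le_rpow_sum' hr0 hr1 s _ (fun i => Real.rpow_nonneg (abs_nonneg _) _)
      _ = ∑ i ∈ s, |a i| ^ p := by
          refine Finset.sum_congr rfl fun i _ => ?_
          rw [← Real.rpow_mul (abs_nonneg _), mul_div_cancel₀ _ (ne_of_gt (lt_of_lt_of_le (lt_of_lt_of_le one_pos hp) hpq))]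
  calc (∑ i ∈ s, |a i| ^ q) ^ (1/q)
      = ((∑ i ∈ s, |a i| ^ q) ^ (p/q)) ^ (1/p) := by
        rw [← Real.rpow_mul (Finset.sum_nonneg fun i _ => Real.rpow_nonneg (abs_nonneg _) _)]
        congr 1
        field_simp
    _ ≤ (∑ i ∈ s, |a i| ^ p) ^ (1/p) :=
        Real.rpow_le_rpow (Real.rpow_nonneg (Finset.sum_nonneg fun i _ => Real.rpow_nonneg (abs_nonneg _) _) _) key (by positivity)

lemma schreier_spread (𝒮 : SchreierSystem) (φ : ℕ → ℕ) (hφ : StrictMono φ) :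
    ∀ ξ : Ordinal, ∀ F ∈ 𝒮.S ξ, F.image φ ∈ 𝒮.S ξ := by
  intro ξ
  induction ξ using Ordinal.induction with
  | h ξ IH =>
    rcases le_or_gt (ω₁ : Ordinal) ξ with hξ | hξ
    · rw [𝒮.top ξ hξ]; intro F _; trivial
    rcases Ordinal.zero_or_succ_or_isSuccLimit ξ with h0 | ⟨ζ, hζ⟩ | hlim
    · subst h0
      rw [𝒮.zero]
      intro F hF
      exact le_trans Finset.card_image_le hF
    · subst hζ
      have hζξ : ζ < Order.succ ζ := Order.lt_succ ζ
      have hζω : ζ < ω₁ := lt_trans hζξ hξ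
      rw [show (Order.succ ζ : Ordinal) = ζ + 1 from (Ordinal.add_one_eq_succ ζ).symm,
        𝒮.succ ζ hζω]
      rintro F (rfl | ⟨n, f, hf, hord, hmin, hun⟩)
      · left; simp
      · right
        refine ⟨n, fun i => (f i).image φ, fun i => IH ζ hζξ _ (hf i), ?_, ?_, ?_⟩
        · intro i j hij a ha b hb
          simp only [Finset.mem_image] at ha hb
          obtain ⟨a', ha', rfl⟩ := ha
          obtain ⟨b', hb', rfl⟩ := hb
          exact hφ (hord i j hij a' ha' b' hb')
        · intro a ha
          simp only [Finset.mem_image] at ha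
          obtain ⟨b, hb, rfl⟩ := ha
          exact le_trans (hmin b hb) (hφ.le_apply)
        · rw [hun, Finset.biUnion_image]
    · obtain ⟨ζs, hsm, _, hsup, hset⟩ := 𝒮.limit ξ hlim hξ
      rw [hset]
      rintro F ⟨n, hF, hmin⟩
      have hζn : ζs n < ξ := by
        rw [← hsup]
        exact lt_of_lt_of_le (hsm (Nat.lt_succ_self n)) (Ordinal.le_iSup ζs (n+1))
      refine ⟨n, IH (ζs n) hζn _ hF, ?_⟩
      intro a ha
      simp only [Finset.mem_image] at ha
      obtain ⟨b, hb, rfl⟩ := ha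
      exact le_trans (hmin b hb) (hφ.le_apply)


lemma transfer_sum {X : Type*} [NormedAddCommGroup X] [NormedSpace ℝ X]
    (ψ : ℕ → ℕ) (a : ℕ → ℝ) (F G : Finset ℕ) (v : ℕ → X) :
    ∑ i ∈ G, (∑ t ∈ F, if ψ t = i then a t else 0) • v i
      = ∑ t ∈ F, if ψ t ∈ G then a t • v (ψ t) else 0 := by
  have : ∀ i ∈ G, (∑ t ∈ F, if ψ t = i then a t else 0) • v i
      = ∑ t ∈ F, if ψ t = i then a t • v (ψ t) else 0 := by
    intro i _
    rw [Finset.sum_smul]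
    refine Finset.sum_congr rfl fun t _ => ?_
    split_ifs with h
    · rw [h]
    · exact zero_smul _ _
  rw [Finset.sum_congr rfl this, Finset.sum_comm]
  refine Finset.sum_congr rfl fun t _ => ?_
  exact Finset.sum_ite_eq G (ψ t) (fun _ => a t • v (ψ t))

lemma transfer_apply (ψ : ℕ → ℕ) (hψ : Function.Injective ψ) (a : ℕ → ℝ) (F : Finset ℕ)
    {t : ℕ} (ht : t ∈ F) : (∑ s ∈ F, if ψ s = ψ t then a s else 0) = a t := by
  have : ∀ s ∈ F, (if ψ s = ψ t then a s else 0) = if s = t then a s else 0 := by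
    intro s _
    simp only [hψ.eq_iff]
  rw [Finset.sum_congr rfl this, Finset.sum_ite_eq' F t (fun s => a s), if_pos ht]

lemma filter_lt_range (n m : ℕ) (h : m ≤ n) :
    (Finset.range n).filter (fun t => t < m) = Finset.range m := by
  ext t
  simp only [Finset.mem_filter, Finset.mem_range]
  omega

lemma subseq_sum_eq {X : Type*} [NormedAddCommGroup X] [NormedSpace ℝ X]
    (x : ℕ → X) (φ : ℕ → ℕ) (hφ : StrictMono φ) (a : ℕ → ℝ) {m n : ℕ}
    (hm : 0 < m) (hmn : m ≤ n) :
    ∑ i ∈ Finset.range (φ (m-1) + 1), (∑ t ∈ Finset.range n, if φ t = i then a t else 0) • x i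
      = ∑ t ∈ Finset.range m, a t • x (φ t) := by
  rw [transfer_sum]
  have : ∀ t ∈ Finset.range n, (if φ t ∈ Finset.range (φ (m-1) + 1) then a t • x (φ t) else 0)
      = if t < m then a t • x (φ t) else 0 := by
    intro t _
    congr 1
    simp only [Finset.mem_range, Nat.lt_succ_iff, eq_iff_iff]
    rw [hφ.le_iff_le]
    omega
  rw [Finset.sum_congr rfl this, ← Finset.sum_filter, filter_lt_range n m hmn]

lemma isBasicSeq_subseq {X : Type*} [NormedAddCommGroup X] [NormedSpace ℝ X]
    {x : ℕ → X} (hb : IsBasicSeq x) (φ : ℕ → ℕ) (hφ : StrictMono φ) :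
    IsBasicSeq (fun k => x (φ k)) := by
  obtain ⟨hnz, K, hK1, hK⟩ := hb
  refine ⟨fun n => hnz (φ n), K, hK1, ?_⟩
  intro a m n hmn
  rcases Nat.eq_zero_or_pos m with rfl | hm
  · simp only [Finset.range_zero, Finset.sum_empty, norm_zero]
    positivity
  have hn : 0 < n := lt_of_lt_of_le hm hmn
  set b : ℕ → ℝ := fun i => ∑ t ∈ Finset.range n, if φ t = i then a t else 0 with hbdef
  have e1 := subseq_sum_eq x φ hφ a hm hmn
  have e2 := subseq_sum_eq x φ hφ a hn (le_refl n)
  rw [← e1, ← e2]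
  exact hK b _ _ (by have := hφ.le_iff_le.2 (show m - 1 ≤ n - 1 by omega); omega)


section LpAux
variable {P : ENNReal} [Fact (1 ≤ P)] (hP : 0 < P.toReal)

local notation "X" => lp (fun _ : ℕ => ℝ) P

lemma head_coord (hP : 0 < P.toReal) (c : ℕ → ℝ) (S : Finset ℕ) (j : ℕ) :
    (((∑ i ∈ S, lp.single P i (c i)) : X) : ∀ _ : ℕ, ℝ) j = if j ∈ S then c j else 0 := by
  rw [lp.coeFn_sum, Finset.sum_apply]
  have h : ∀ i ∈ S, (lp.single P i (c i) : X) j = if j = i then c i else 0 := by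
    intro i _
    rcases eq_or_ne j i with rfl | h
    · rw [lp.single_apply_self, if_pos rfl]
    · rw [lp.single_apply_ne P i _ h, if_neg h]
  rw [Finset.sum_congr rfl h, Finset.sum_ite_eq S j (fun i => c i)]

lemma head_small (hP : 0 < P.toReal) (z : ℕ → X) (hz : ∀ i, Tendsto (fun k => (z k : ∀ _ : ℕ, ℝ) i) atTop (𝓝 0))
    (N : ℕ) {ε : ℝ} (hε : 0 < ε) :
    ∃ K₀ : ℕ, ∀ k ≥ K₀, ‖(∑ i ∈ Finset.range N, lp.single P i ((z k : ∀ _ : ℕ, ℝ) i) : X)‖ ≤ ε := by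
  have hsum : Tendsto (fun k => ∑ i ∈ Finset.range N, ‖(z k : ∀ _ : ℕ, ℝ) i‖) atTop (𝓝 0) := by
    have : Tendsto (fun k => ∑ i ∈ Finset.range N, ‖(z k : ∀ _ : ℕ, ℝ) i‖) atTop
        (𝓝 (∑ i ∈ Finset.range N, (0:ℝ))) :=
      tendsto_finset_sum _ fun i _ => by simpa using (hz i).norm
    simpa using this
  have hev : ∀ᶠ k in atTop, ∑ i ∈ Finset.range N, ‖(z k : ∀ _ : ℕ, ℝ) i‖ < ε :=
    hsum.eventually (gt_mem_nhds hε)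
  obtain ⟨K₀, hK₀⟩ := eventually_atTop.1 hev
  refine ⟨K₀, fun k hk => ?_⟩
  calc ‖(∑ i ∈ Finset.range N, lp.single P i ((z k : ∀ _ : ℕ, ℝ) i) : X)‖
      ≤ ∑ i ∈ Finset.range N, ‖(lp.single P i ((z k : ∀ _ : ℕ, ℝ) i) : X)‖ := norm_sum_le _ _
    _ = ∑ i ∈ Finset.range N, ‖(z k : ∀ _ : ℕ, ℝ) i‖ :=
        Finset.sum_congr rfl fun i _ => lp.norm_single (E := fun _ : ℕ => ℝ) (ENNReal.toReal_pos_iff.1 hP).1 i _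
    _ ≤ ε := (hK₀ k hk).le

lemma tail_small (hP : 0 < P.toReal) (f : X) {ε : ℝ} (hε : 0 < ε) :
    ∃ N₀ : ℕ, ∀ N ≥ N₀, ‖f - ∑ i ∈ Finset.range N, lp.single P i ((f : ∀ _ : ℕ, ℝ) i)‖ ≤ ε := by
  have hhs : HasSum (fun i => ‖(f : ∀ _ : ℕ, ℝ) i‖ ^ P.toReal) (‖f‖ ^ P.toReal) :=
    lp.hasSum_norm hP f
  have htendsto : Tendsto
      (fun N => ‖f - ∑ i ∈ Finset.range N, lp.single P i ((f : ∀ _ : ℕ, ℝ) i)‖ ^ P.toReal)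
      atTop (𝓝 0) := by
    have h1 : ∀ N, ‖f - ∑ i ∈ Finset.range N, lp.single P i ((f : ∀ _ : ℕ, ℝ) i)‖ ^ P.toReal
        = ‖f‖ ^ P.toReal - ∑ i ∈ Finset.range N, ‖(f : ∀ _ : ℕ, ℝ) i‖ ^ P.toReal := fun N =>
      lp.norm_compl_sum_single hP f (Finset.range N)
    simp only [h1]
    have := hhs.tendsto_sum_nat
    have h2 := (tendsto_const_nhds (x := ‖f‖ ^ P.toReal) (f := atTop)).sub this
    simpa using h2
  have hev : ∀ᶠ N in atTop,
      ‖f - ∑ i ∈ Finset.range N, lp.single P i ((f : ∀ _ : ℕ, ℝ) i)‖ ^ P.toReal < ε ^ P.toReal :=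
    htendsto.eventually (gt_mem_nhds (by positivity))
  obtain ⟨N₀, hN₀⟩ := eventually_atTop.1 hev
  refine ⟨N₀, fun N hN => ?_⟩
  have := (hN₀ N hN).le
  exact (Real.rpow_le_rpow_iff (norm_nonneg _) hε.le hP).1 this

lemma block_norm_le (hP : 0 < P.toReal) (B : ℕ → Finset ℕ) (hdisj : ∀ s t, s ≠ t → Disjoint (B s) (B t))
    (c : ℕ → ℕ → ℝ) {R : ℝ} (hR : 0 ≤ R)
    (hc : ∀ t, ∑ i ∈ B t, |c t i| ^ P.toReal ≤ R ^ P.toReal) (a : ℕ → ℝ) (F : Finset ℕ) :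
    ‖∑ t ∈ F, a t • (∑ i ∈ B t, lp.single P i (c t i) : X)‖
      ≤ R * (∑ t ∈ F, |a t| ^ P.toReal) ^ (1 / P.toReal) := by
  classical
  set g : ℕ → ℝ := fun i => ∑ t ∈ F, if i ∈ B t then a t * c t i else 0 with hgdef
  have hg : ∀ t ∈ F, ∀ i ∈ B t, g i = a t * c t i := by
    intro t ht i hi
    simp only [hgdef]
    have : ∀ s ∈ F, (if i ∈ B s then a s * c s i else 0)
        = if s = t then a t * c t i else 0 := by
      intro s _
      rcases eq_or_ne s t with rfl | hst
      · simp [hi]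
      · rw [if_neg hst, if_neg (fun hmem => (Finset.disjoint_left.1 (hdisj s t hst)) hmem hi)]
    rw [Finset.sum_congr rfl this, Finset.sum_ite_eq' F t _, if_pos ht]
  have hrw : ∑ t ∈ F, a t • (∑ i ∈ B t, lp.single P i (c t i) : X)
      = ∑ i ∈ F.biUnion B, lp.single P i (g i) := by
    rw [Finset.sum_biUnion (fun s hs t ht hst => hdisj s t hst)]
    refine Finset.sum_congr rfl fun t ht => ?_
    rw [Finset.smul_sum]
    refine Finset.sum_congr rfl fun i hi => ?_
    rw [hg t ht i hi, ← _root_.smul_eq_mul, lp.single_smul]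
  rw [hrw]
  have hnorm : ‖(∑ i ∈ F.biUnion B, lp.single P i (g i) : X)‖ ^ P.toReal
      = ∑ i ∈ F.biUnion B, |g i| ^ P.toReal := by
    have := lp.norm_sum_single hP g (F.biUnion B)
    simpa [Real.norm_eq_abs] using this
  have hbound : ∑ i ∈ F.biUnion B, |g i| ^ P.toReal
      ≤ (R * (∑ t ∈ F, |a t| ^ P.toReal) ^ (1 / P.toReal)) ^ P.toReal := by
    have h1 : ∑ i ∈ F.biUnion B, |g i| ^ P.toReal
        = ∑ t ∈ F, ∑ i ∈ B t, |g i| ^ P.toReal :=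
      Finset.sum_biUnion (fun s hs t ht hst => hdisj s t hst)
    have h2 : ∀ t ∈ F, ∑ i ∈ B t, |g i| ^ P.toReal ≤ |a t| ^ P.toReal * R ^ P.toReal := by
      intro t ht
      have : ∀ i ∈ B t, |g i| ^ P.toReal = |a t| ^ P.toReal * |c t i| ^ P.toReal := by
        intro i hi
        rw [hg t ht i hi, abs_mul, Real.mul_rpow (abs_nonneg _) (abs_nonneg _)]
      rw [Finset.sum_congr rfl this, ← Finset.mul_sum]
      exact mul_le_mul_of_nonneg_left (hc t) (Real.rpow_nonneg (abs_nonneg _) _)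
    have h3 : (R * (∑ t ∈ F, |a t| ^ P.toReal) ^ (1 / P.toReal)) ^ P.toReal
        = R ^ P.toReal * ∑ t ∈ F, |a t| ^ P.toReal := by
      have hS : (0:ℝ) ≤ ∑ t ∈ F, |a t| ^ P.toReal :=
        Finset.sum_nonneg fun t _ => Real.rpow_nonneg (abs_nonneg _) _
      rw [Real.mul_rpow hR (Real.rpow_nonneg hS _), ← Real.rpow_mul hS,
        one_div, inv_mul_cancel₀ hP.ne', Real.rpow_one]
    rw [h1, h3]
    calc ∑ t ∈ F, ∑ i ∈ B t, |g i| ^ P.toReal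
        ≤ ∑ t ∈ F, |a t| ^ P.toReal * R ^ P.toReal := Finset.sum_le_sum h2
      _ = R ^ P.toReal * ∑ t ∈ F, |a t| ^ P.toReal := by rw [← Finset.sum_mul, mul_comm]
  have final : ‖(∑ i ∈ F.biUnion B, lp.single P i (g i) : X)‖ ^ P.toReal
      ≤ (R * (∑ t ∈ F, |a t| ^ P.toReal) ^ (1 / P.toReal)) ^ P.toReal := by
    rw [hnorm]; exact hbound
  exact (Real.rpow_le_rpow_iff (norm_nonneg _) (by positivity) hP).1 final

end LpAux

set_option maxHeartbeats 1600000 in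
lemma key_extract (p q : ℝ) (hp : 1 ≤ p) (hpq : p ≤ q)
    [Fact (1 ≤ ENNReal.ofReal q)]
    {E : Type} [NormedAddCommGroup E] [NormedSpace ℝ E]
    (e : ℕ → E) (he : IsLpBasis p e)
    (x : ℕ → lp (fun _ : ℕ => ℝ) (ENNReal.ofReal q)) (hn : ∀ n, ‖x n‖ = 1)
    (hb : IsBasicSeq x) :
    ∃ φ : ℕ → ℕ, StrictMono φ ∧ Dominates e (fun k => x (φ k)) := by
  classical
  have hq1 : 1 ≤ q := le_trans hp hpq
  have hq0 : 0 < q := lt_of_lt_of_le one_pos hq1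
  have hp0 : 0 < p := lt_of_lt_of_le one_pos hp
  obtain ⟨hnz, K, hK1, hK⟩ := hb
  rcases eq_or_lt_of_le hq1 with hq1' | hq1'
  · -- trivial case q = 1 (hence p = 1)
    have hp1 : p = 1 := le_antisymm (le_trans hpq hq1'.ge) hp
    refine ⟨id, strictMono_id, 1, one_pos, fun a F => ?_⟩
    have h1 : ‖∑ n ∈ F, a n • x n‖ ≤ ∑ n ∈ F, |a n| := by
      calc ‖∑ n ∈ F, a n • x n‖ ≤ ∑ n ∈ F, ‖a n • x n‖ := norm_sum_le _ _
        _ = ∑ n ∈ F, |a n| := Finset.sum_congr rfl fun n _ => by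
            rw [norm_smul, hn n, mul_one, Real.norm_eq_abs]
    rw [he a F, hp1, one_mul]
    simp only [Real.rpow_one, one_div_one]
    exact h1
  -- main case 1 < q
  have htq : (ENNReal.ofReal q).toReal = q := ENNReal.toReal_ofReal hq0.le
  have htq0 : 0 < (ENNReal.ofReal q).toReal := by rw [htq]; exact hq0
  have hPne : ENNReal.ofReal q ≠ 0 := (ENNReal.ofReal_pos.2 hq0).ne'
  -- coordinates are in [-1, 1]
  have hcoordmem : ∀ k, (fun i => (x k : ∀ _ : ℕ, ℝ) i) ∈
      Set.pi Set.univ (fun _ : ℕ => Set.Icc (-1:ℝ) 1) := by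
    intro k i _
    have h1 : ‖(x k : ∀ _ : ℕ, ℝ) i‖ ≤ ‖x k‖ := lp.norm_apply_le_norm hPne (x k) i
    rw [hn k, Real.norm_eq_abs] at h1
    exact Set.mem_Icc.2 (abs_le.1 h1)
  obtain ⟨y, -, φ₀, hφ₀, hconv⟩ :=
    (isCompact_univ_pi fun _ : ℕ => isCompact_Icc).tendsto_subseq hcoordmem
  have hyconv : ∀ i, Tendsto (fun k => (x (φ₀ k) : ∀ _ : ℕ, ℝ) i) atTop (𝓝 (y i)) := by
    intro i
    have := (tendsto_pi_nhds.1 hconv) i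
    simpa [Function.comp] using this
  -- Fatou-type bound and the weak limit as an element of ℓ_q
  have hFatou : ∀ F : Finset ℕ, ∑ i ∈ F, ‖y i‖ ^ (ENNReal.ofReal q).toReal ≤ 1 := by
    intro F
    have hlim : Tendsto (fun k => ∑ i ∈ F, ‖(x (φ₀ k) : ∀ _ : ℕ, ℝ) i‖ ^ (ENNReal.ofReal q).toReal) atTop
        (𝓝 (∑ i ∈ F, ‖y i‖ ^ (ENNReal.ofReal q).toReal)) :=
      tendsto_finset_sum _ fun i _ => ((hyconv i).norm.rpow_const (Or.inr htq0.le))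
    refine le_of_tendsto hlim (Eventually.of_forall fun k => ?_)
    calc ∑ i ∈ F, ‖(x (φ₀ k) : ∀ _ : ℕ, ℝ) i‖ ^ (ENNReal.ofReal q).toReal ≤ ‖x (φ₀ k)‖ ^ (ENNReal.ofReal q).toReal :=
          lp.sum_rpow_le_norm_rpow htq0 (x (φ₀ k)) F
      _ = 1 := by rw [hn, Real.one_rpow]
  have hymem : Memℓp y (ENNReal.ofReal q) := memℓp_gen' hFatou
  set Y : lp (fun _ : ℕ => ℝ) (ENNReal.ofReal q) := ⟨y, hymem⟩ with hYdef
  have hYnorm : ‖Y‖ ≤ 1 :=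
    lp.norm_le_of_forall_sum_le htq0 one_pos.le (fun s => by rw [Real.one_rpow]; exact hFatou s)
  set z : ℕ → lp (fun _ : ℕ => ℝ) (ENNReal.ofReal q) := fun k => x (φ₀ k) - Y with hzdef
  have hz2 : ∀ k, ‖z k‖ ≤ 2 := by
    intro k
    have h1 : ‖x (φ₀ k) - Y‖ ≤ ‖x (φ₀ k)‖ + ‖Y‖ := norm_sub_le _ _
    rw [hn] at h1
    simp only [hzdef]
    linarith
  have hzcoord : ∀ k i, (z k : ∀ _ : ℕ, ℝ) i = (x (φ₀ k) : ∀ _ : ℕ, ℝ) i - y i := by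
    intro k i
    simp only [hzdef, lp.coeFn_sub, Pi.sub_apply]
    rfl
  have hz0 : ∀ i, Tendsto (fun k => (z k : ∀ _ : ℕ, ℝ) i) atTop (𝓝 0) := by
    intro i
    simp only [hzcoord]
    simpa using (hyconv i).sub_const (y i)
  -- the error tolerances
  set δ : ℕ → ℝ := fun t => (2:ℝ)⁻¹ ^ t with hδdef
  have hδpos : ∀ t, 0 < δ t := fun t => pow_pos (by norm_num) t
  have hδanti : ∀ s t, s ≤ t → δ t ≤ δ s := fun s t hst =>
    pow_le_pow_of_le_one (by norm_num) (by norm_num) hst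
  have hδsummable : Summable δ := summable_geometric_of_lt_one (by norm_num) (by norm_num)
  have hδtsum : ∑' t, δ t = 2 := by
    rw [hδdef, tsum_geometric_of_lt_one (by norm_num) (by norm_num)]
    norm_num
  have hδFsum : ∀ F : Finset ℕ, ∑ t ∈ F, δ t ≤ 2 := by
    intro F
    rw [← hδtsum]
    exact Summable.sum_le_tsum F (fun t _ => (hδpos t).le) hδsummable
  -- the gliding-hump extraction
  have hstep : ∀ (t kp Np : ℕ), ∃ kN : ℕ × ℕ, kp < kN.1 ∧ Np < kN.2 ∧
      ‖(∑ i ∈ Finset.range Np, lp.single (ENNReal.ofReal q) i ((z kN.1 : ∀ _ : ℕ, ℝ) i) :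
        lp (fun _ : ℕ => ℝ) (ENNReal.ofReal q))‖ ≤ δ t ∧
      ‖z kN.1 - ∑ i ∈ Finset.range kN.2, lp.single (ENNReal.ofReal q) i ((z kN.1 : ∀ _ : ℕ, ℝ) i)‖ ≤ δ t := by
    intro t kp Np
    obtain ⟨K₀, hK₀⟩ := head_small htq0 z hz0 Np (hδpos t)
    obtain ⟨N₀, hN₀⟩ := tail_small htq0 (z (max K₀ (kp + 1))) (hδpos t)
    refine ⟨(max K₀ (kp + 1), max N₀ (Np + 1)), ?_, ?_, ?_, ?_⟩
    · exact lt_of_lt_of_le (Nat.lt_succ_self kp) (le_max_right _ _)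
    · exact lt_of_lt_of_le (Nat.lt_succ_self Np) (le_max_right _ _)
    · exact hK₀ _ (le_max_left _ _)
    · exact hN₀ _ (le_max_left _ _)
  obtain ⟨k, N, hk_mono, hN_mono, hhead, htail⟩ :
      ∃ k N : ℕ → ℕ, StrictMono k ∧ StrictMono N ∧
        (∀ t, ‖(∑ i ∈ Finset.range (N t),
            lp.single (ENNReal.ofReal q) i ((z (k t) : ∀ _ : ℕ, ℝ) i) :
          lp (fun _ : ℕ => ℝ) (ENNReal.ofReal q))‖ ≤ δ t) ∧
        (∀ t, ‖z (k t) - ∑ i ∈ Finset.range (N (t+1)),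
            lp.single (ENNReal.ofReal q) i ((z (k t) : ∀ _ : ℕ, ℝ) i)‖ ≤ δ t) := by
    choose step hstep1 hstep2 hstep3 hstep4 using hstep
    set sfun : ℕ → ℕ × ℕ := fun t => Nat.rec ((0,0) : ℕ × ℕ) (fun t ih => step t ih.1 ih.2) t
      with hsfun
    refine ⟨fun t => (sfun (t+1)).1, fun t => (sfun t).2, ?_, ?_, ?_, ?_⟩
    · exact strictMono_nat_of_lt_succ fun t => hstep1 (t+1) (sfun (t+1)).1 (sfun (t+1)).2
    · exact strictMono_nat_of_lt_succ fun t => hstep2 t (sfun t).1 (sfun t).2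
    · exact fun t => hstep3 t (sfun t).1 (sfun t).2
    · exact fun t => hstep4 t (sfun t).1 (sfun t).2
  -- the blocks
  set u : ℕ → lp (fun _ : ℕ => ℝ) (ENNReal.ofReal q) := fun t =>
    ∑ i ∈ Finset.Ico (N t) (N (t+1)), lp.single (ENNReal.ofReal q) i ((z (k t) : ∀ _ : ℕ, ℝ) i) with hudef
  have hsplit : ∀ t, (∑ i ∈ Finset.range (N t), lp.single (ENNReal.ofReal q) i ((z (k t) : ∀ _ : ℕ, ℝ) i) :
      lp (fun _ : ℕ => ℝ) (ENNReal.ofReal q)) + u t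
      = ∑ i ∈ Finset.range (N (t+1)), lp.single (ENNReal.ofReal q) i ((z (k t) : ∀ _ : ℕ, ℝ) i) := by
    intro t
    simp only [hudef]
    simp only [Finset.range_eq_Ico]
    exact Finset.sum_Ico_consecutive _ (Nat.zero_le _) (hN_mono (Nat.lt_succ_self t)).le
  have herr : ∀ t, ‖z (k t) - u t‖ ≤ 2 * δ t := by
    intro t
    have h1 : z (k t) - u t = (z (k t) -
        ∑ i ∈ Finset.range (N (t+1)), lp.single (ENNReal.ofReal q) i ((z (k t) : ∀ _ : ℕ, ℝ) i))
        + ∑ i ∈ Finset.range (N t), lp.single (ENNReal.ofReal q) i ((z (k t) : ∀ _ : ℕ, ℝ) i) := by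
      rw [← hsplit t]; abel
    rw [h1]
    refine le_trans (norm_add_le _ _) ?_
    have := htail t
    have := hhead t
    linarith
  have hupow : ∀ t, ∑ i ∈ Finset.Ico (N t) (N (t+1)),
      |(z (k t) : ∀ _ : ℕ, ℝ) i| ^ (ENNReal.ofReal q).toReal ≤ (2:ℝ) ^ (ENNReal.ofReal q).toReal := by
    intro t
    have h1 := lp.sum_rpow_le_norm_rpow htq0 (z (k t)) (Finset.Ico (N t) (N (t+1)))
    simp only [Real.norm_eq_abs] at h1
    exact le_trans h1 (Real.rpow_le_rpow (norm_nonneg _) (hz2 _) htq0.le)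
  have hBdisj : ∀ s t : ℕ, s ≠ t →
      Disjoint (Finset.Ico (N s) (N (s+1))) (Finset.Ico (N t) (N (t+1))) := by
    intro s t hst
    rw [Finset.disjoint_left]
    intro i hi hi'
    rw [Finset.mem_Ico] at hi hi'
    rcases lt_or_gt_of_ne hst with h | h
    · have : N (s+1) ≤ N t := hN_mono.le_iff_le.mpr (show s+1 ≤ t by omega)
      omega
    · have : N (t+1) ≤ N s := hN_mono.le_iff_le.mpr (show t+1 ≤ s by omega)
      omega
  have hblock : ∀ (a : ℕ → ℝ) (F : Finset ℕ),
      ‖∑ t ∈ F, a t • u t‖ ≤ 2 * (∑ t ∈ F, |a t| ^ (ENNReal.ofReal q).toReal) ^ (1 / (ENNReal.ofReal q).toReal) := by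
    intro a F
    have := block_norm_le htq0 (fun t => Finset.Ico (N t) (N (t+1))) hBdisj
      (fun t i => (z (k t) : ∀ _ : ℕ, ℝ) i) (by norm_num : (0:ℝ) ≤ 2) hupow a F
    simpa only [hudef] using this
  -- coordinates of the selected vectors are close to y
  have hzsmall : ∀ t j, j < N t → |(z (k t) : ∀ _ : ℕ, ℝ) j| ≤ δ t := by
    intro t j hj
    have h1 := lp.norm_apply_le_norm hPne
      (∑ i ∈ Finset.range (N t), lp.single (ENNReal.ofReal q) i ((z (k t) : ∀ _ : ℕ, ℝ) i)) j
    rw [head_coord htq0 (fun i => (z (k t) : ∀ _ : ℕ, ℝ) i) (Finset.range (N t)) j,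
      if_pos (Finset.mem_range.2 hj), Real.norm_eq_abs] at h1
    exact le_trans h1 (hhead t)
  -- the weak limit is zero
  have hy0 : ∀ i, y i = 0 := by
    by_contra hcon
    push_neg at hcon
    obtain ⟨j, hj⟩ := hcon
    set ε := |y j| with hεdef
    have hε : 0 < ε := abs_pos.2 hj
    obtain ⟨T₁, hT₁⟩ : ∃ T₁ : ℕ, δ T₁ ≤ ε / 4 := by
      obtain ⟨n, hn'⟩ := exists_pow_lt_of_lt_one (show (0:ℝ) < ε/4 by linarith)
        (show (2:ℝ)⁻¹ < 1 by norm_num)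
      exact ⟨n, hn'.le⟩
    set T := max T₁ (j+1) with hTdef
    have hδT : ∀ t, T ≤ t → δ t ≤ ε / 4 := fun t ht =>
      le_trans (hδanti T₁ t (le_trans (le_max_left _ _) ht)) hT₁
    set ψ : ℕ → ℕ := fun t => φ₀ (k t) with hψdef
    have hψmono : StrictMono ψ := hφ₀.comp hk_mono
    have hwj : ∀ t, T ≤ t → |(x (ψ t) : ∀ _ : ℕ, ℝ) j - y j| ≤ ε / 4 := by
      intro t ht
      have hjT : j + 1 ≤ T := le_max_right _ _
      have hjN : j < N t := lt_of_lt_of_le (by omega : j < T) (le_trans ht (hN_mono.le_apply))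
      have h1 := hzsmall t j hjN
      rw [hzcoord] at h1
      exact le_trans (le_of_eq (by rw [hψdef])) (le_trans h1 (hδT t ht))
    have hgrun : ∀ M : ℕ, 1 ≤ M →
        ε / 2 ≤ K * (2 * (2 * (M:ℝ) * ((M:ℝ)⁻¹) ^ q) ^ (1/q) + 4 / (M:ℝ)) := by
      intro M hM
      have hMpos : (0:ℝ) < M := by exact_mod_cast hM
      set c : ℕ → ℝ := fun t => if t < T + M then (M:ℝ)⁻¹ else -(M:ℝ)⁻¹ with hcdef
      have hcabs : ∀ t, |c t| = (M:ℝ)⁻¹ := by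
        intro t
        simp only [hcdef]
        split_ifs
        · exact abs_of_nonneg (by positivity)
        · rw [abs_neg]; exact abs_of_nonneg (by positivity)
      set a : ℕ → ℝ := fun i => ∑ t ∈ Finset.Ico T (T + 2*M), if ψ t = i then c t else 0
        with hadef
      set S₁ := ∑ t ∈ Finset.Ico T (T + M), c t • x (ψ t) with hS₁
      set S₂ := ∑ t ∈ Finset.Ico T (T + 2*M), c t • x (ψ t) with hS₂
      have hm1 : ∑ i ∈ Finset.range (ψ (T+M-1) + 1), a i • x i = S₁ := by
        simp only [hadef]
        rw [transfer_sum ψ c (Finset.Ico T (T+2*M)) (Finset.range (ψ (T+M-1)+1)) x]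
        have hcong : ∀ t ∈ Finset.Ico T (T+2*M),
            (if ψ t ∈ Finset.range (ψ (T+M-1)+1) then c t • x (ψ t) else 0)
            = if t < T + M then c t • x (ψ t) else 0 := by
          intro t _
          congr 1
          simp only [Finset.mem_range, Nat.lt_succ_iff, eq_iff_iff]
          rw [hψmono.le_iff_le]
          omega
        rw [Finset.sum_congr rfl hcong, ← Finset.sum_filter, hS₁]
        congr 1
        ext t
        simp only [Finset.mem_filter, Finset.mem_Ico]
        omega
      have hn1 : ∑ i ∈ Finset.range (ψ (T+2*M-1) + 1), a i • x i = S₂ := by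
        simp only [hadef]
        rw [transfer_sum ψ c (Finset.Ico T (T+2*M)) (Finset.range (ψ (T+2*M-1)+1)) x]
        have hcong : ∀ t ∈ Finset.Ico T (T+2*M),
            (if ψ t ∈ Finset.range (ψ (T+2*M-1)+1) then c t • x (ψ t) else 0)
            = c t • x (ψ t) := by
          intro t ht
          rw [Finset.mem_Ico] at ht
          rw [if_pos]
          simp only [Finset.mem_range, Nat.lt_succ_iff]
          rw [hψmono.le_iff_le]
          omega
        rw [Finset.sum_congr rfl hcong, hS₂]
      -- lower bound for ‖S₁‖
      have hS₁coord : (S₁ : ∀ _ : ℕ, ℝ) j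
          = ∑ t ∈ Finset.Ico T (T+M), c t * (x (ψ t) : ∀ _ : ℕ, ℝ) j := by
        rw [hS₁, lp.coeFn_sum, Finset.sum_apply]
        refine Finset.sum_congr rfl fun t _ => ?_
        rw [lp.coeFn_smul, Pi.smul_apply, _root_.smul_eq_mul]
      have hcsum1 : ∑ t ∈ Finset.Ico T (T+M), c t = 1 := by
        have hc1 : ∀ t ∈ Finset.Ico T (T+M), c t = (M:ℝ)⁻¹ := by
          intro t ht
          rw [Finset.mem_Ico] at ht
          simp only [hcdef]
          rw [if_pos (by omega)]
        rw [Finset.sum_congr rfl hc1, Finset.sum_const, Nat.card_Ico, Nat.add_sub_cancel_left,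
          _root_.nsmul_eq_mul]
        field_simp
      have hdiff : |(S₁ : ∀ _ : ℕ, ℝ) j - y j| ≤ ε/4 := by
        have heq : ∑ t ∈ Finset.Ico T (T+M), c t * ((x (ψ t) : ∀ _ : ℕ, ℝ) j - y j)
            = (S₁ : ∀ _ : ℕ, ℝ) j - y j := by
          rw [hS₁coord]
          simp only [_root_.mul_sub]
          rw [Finset.sum_sub_distrib, ← Finset.sum_mul, hcsum1, one_mul]
        rw [← heq]
        refine le_trans (Finset.abs_sum_le_sum_abs _ _) ?_
        have hb1 : ∀ t ∈ Finset.Ico T (T+M),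
            |c t * ((x (ψ t) : ∀ _ : ℕ, ℝ) j - y j)| ≤ (M:ℝ)⁻¹ * (ε/4) := by
          intro t ht
          rw [Finset.mem_Ico] at ht
          rw [abs_mul, hcabs]
          exact mul_le_mul_of_nonneg_left (hwj t ht.1) (by positivity)
        refine le_trans (Finset.sum_le_sum hb1) ?_
        rw [Finset.sum_const, Nat.card_Ico, Nat.add_sub_cancel_left, _root_.nsmul_eq_mul]
        rw [show (M:ℝ) * ((M:ℝ)⁻¹ * (ε/4)) = ((M:ℝ) * (M:ℝ)⁻¹) * (ε/4) by ring,
          mul_inv_cancel₀ hMpos.ne', one_mul]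
      have hS₁j : ε/2 ≤ ‖S₁‖ := by
        have hcoordle : |(S₁ : ∀ _ : ℕ, ℝ) j| ≤ ‖S₁‖ := by
          have := lp.norm_apply_le_norm hPne S₁ j
          rwa [Real.norm_eq_abs] at this
        have habs : |y j| - |(S₁ : ∀ _ : ℕ, ℝ) j - y j| ≤ |(S₁ : ∀ _ : ℕ, ℝ) j| := by
          have h2 := abs_sub_abs_le_abs_sub (y j) ((S₁ : ∀ _ : ℕ, ℝ) j)
          rw [abs_sub_comm] at h2
          linarith
        rw [← hεdef] at habs
        linarith
      -- upper bound for ‖S₂‖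
      have hxdecomp : ∀ t, x (ψ t) = Y + u t + (z (k t) - u t) := by
        intro t
        have : z (k t) = x (φ₀ (k t)) - Y := by rw [hzdef]
        rw [hψdef]
        simp only []
        rw [this]
        abel
      have hS₂eq : S₂ = (∑ t ∈ Finset.Ico T (T+2*M), c t) • Y
          + ((∑ t ∈ Finset.Ico T (T+2*M), c t • u t)
          + ∑ t ∈ Finset.Ico T (T+2*M), c t • (z (k t) - u t)) := by
        rw [hS₂, Finset.sum_smul, ← Finset.sum_add_distrib, ← Finset.sum_add_distrib]
        refine Finset.sum_congr rfl fun t _ => ?_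
        rw [hxdecomp t, smul_add, smul_add, add_assoc]
      have hcsum2 : ∑ t ∈ Finset.Ico T (T+2*M), c t = 0 := by
        rw [← Finset.sum_Ico_consecutive _ (show T ≤ T+M by omega) (show T+M ≤ T+2*M by omega),
          hcsum1]
        have hc2 : ∀ t ∈ Finset.Ico (T+M) (T+2*M), c t = -(M:ℝ)⁻¹ := by
          intro t ht
          rw [Finset.mem_Ico] at ht
          simp only [hcdef]
          rw [if_neg (by omega)]
        rw [Finset.sum_congr rfl hc2, Finset.sum_const, Nat.card_Ico,
          show T + 2*M - (T+M) = M by omega, _root_.nsmul_eq_mul]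
        field_simp
        norm_num
      have hcqsum : ∑ t ∈ Finset.Ico T (T+2*M), |c t| ^ (ENNReal.ofReal q).toReal
          = (2*(M:ℝ)) * ((M:ℝ)⁻¹) ^ q := by
        have hc3 : ∀ t ∈ Finset.Ico T (T+2*M), |c t| ^ (ENNReal.ofReal q).toReal = ((M:ℝ)⁻¹) ^ q := by
          intro t _
          rw [hcabs, htq]
        rw [Finset.sum_congr rfl hc3, Finset.sum_const, Nat.card_Ico,
          show T + 2*M - T = 2*M by omega, _root_.nsmul_eq_mul]
        push_cast
        ring
      have hpart2 : ‖∑ t ∈ Finset.Ico T (T+2*M), c t • u t‖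
          ≤ 2 * ((2*(M:ℝ)) * ((M:ℝ)⁻¹) ^ q) ^ (1/q) := by
        have := hblock c (Finset.Ico T (T+2*M))
        rw [hcqsum, htq] at this
        exact this
      have hpart3 : ‖∑ t ∈ Finset.Ico T (T+2*M), c t • (z (k t) - u t)‖ ≤ 4 / (M:ℝ) := by
        refine le_trans (norm_sum_le _ _) ?_
        have hb3 : ∀ t ∈ Finset.Ico T (T+2*M),
            ‖c t • (z (k t) - u t)‖ ≤ (M:ℝ)⁻¹ * (2 * δ t) := by
          intro t _
          rw [norm_smul, Real.norm_eq_abs, hcabs]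
          exact mul_le_mul_of_nonneg_left (herr t) (by positivity)
        refine le_trans (Finset.sum_le_sum hb3) ?_
        have : ∑ t ∈ Finset.Ico T (T+2*M), (M:ℝ)⁻¹ * (2 * δ t)
            = (M:ℝ)⁻¹ * 2 * ∑ t ∈ Finset.Ico T (T+2*M), δ t := by
          rw [Finset.mul_sum]
          exact Finset.sum_congr rfl fun t _ => by ring
        rw [this]
        have h4 := hδFsum (Finset.Ico T (T+2*M))
        have h5 : (0:ℝ) ≤ (M:ℝ)⁻¹ * 2 := by positivity
        calc (M:ℝ)⁻¹ * 2 * ∑ t ∈ Finset.Ico T (T+2*M), δ t ≤ (M:ℝ)⁻¹ * 2 * 2 :=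
              mul_le_mul_of_nonneg_left h4 h5
          _ = 4 / (M:ℝ) := by field_simp; ring
      have hS₂u : ‖S₂‖ ≤ 2 * ((2*(M:ℝ)) * ((M:ℝ)⁻¹) ^ q) ^ (1/q) + 4 / (M:ℝ) := by
        rw [hS₂eq, hcsum2, zero_smul, zero_add]
        exact le_trans (norm_add_le _ _) (add_le_add hpart2 hpart3)
      have hKineq := hK a (ψ (T+M-1) + 1) (ψ (T+2*M-1) + 1)
        (Nat.succ_le_succ (hψmono.le_iff_le.2 (by omega)))
      rw [hm1, hn1] at hKineq
      have hKnn : (0:ℝ) ≤ K := le_trans zero_le_one hK1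
      calc ε/2 ≤ ‖S₁‖ := hS₁j
        _ ≤ K * ‖S₂‖ := hKineq
        _ ≤ K * (2 * ((2*(M:ℝ)) * ((M:ℝ)⁻¹) ^ q) ^ (1/q) + 4 / (M:ℝ)) := by
            refine mul_le_mul_of_nonneg_left ?_ hKnn
            calc ‖S₂‖ ≤ 2 * ((2*(M:ℝ)) * ((M:ℝ)⁻¹) ^ q) ^ (1/q) + 4 / (M:ℝ) := hS₂u
              _ ≤ _ := by norm_num
    -- the Grunblum bound tends to 0, contradiction
    have hexp : (0:ℝ) < (q-1)/q := div_pos (by linarith) hq0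
    have htend0 : Tendsto (fun v : ℝ => K * (2 * ((2:ℝ) ^ (1/q) * v ^ (-((q-1)/q))) + 4 * v⁻¹))
        atTop (𝓝 (K * (2 * ((2:ℝ) ^ (1/q) * 0) + 4 * 0))) := by
      refine Tendsto.const_mul _ (Tendsto.add (Tendsto.const_mul _
        (Tendsto.const_mul _ (tendsto_rpow_neg_atTop hexp)))
        (Tendsto.const_mul _ tendsto_inv_atTop_zero))
    rw [show K * (2 * ((2:ℝ) ^ (1/q) * 0) + 4 * 0) = 0 by ring] at htend0
    have htendN : Tendsto (fun M : ℕ =>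
        K * (2 * ((2:ℝ) ^ (1/q) * (M:ℝ) ^ (-((q-1)/q))) + 4 * (M:ℝ)⁻¹)) atTop (𝓝 0) :=
      htend0.comp tendsto_natCast_atTop_atTop
    have heq' : ∀ M : ℕ, 1 ≤ M → K * (2 * (2 * (M:ℝ) * ((M:ℝ)⁻¹) ^ q) ^ (1/q) + 4 / (M:ℝ))
        = K * (2 * ((2:ℝ) ^ (1/q) * (M:ℝ) ^ (-((q-1)/q))) + 4 * (M:ℝ)⁻¹) := by
      intro M hM
      have hMpos : (0:ℝ) < M := by exact_mod_cast hM
      have h1 : ((M:ℝ)⁻¹) ^ q = (M:ℝ) ^ (-q) := by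
        rw [Real.inv_rpow hMpos.le, Real.rpow_neg hMpos.le]
      have h2 : 2 * (M:ℝ) * ((M:ℝ)⁻¹) ^ q = 2 * (M:ℝ) ^ (1-q) := by
        have h2a : (M:ℝ) ^ (1-q) = (M:ℝ) ^ (1:ℝ) * (M:ℝ) ^ (-q) := by
          rw [← Real.rpow_add hMpos]
          ring_nf
        rw [h1, h2a, Real.rpow_one]
        ring
      have h3 : (2 * (M:ℝ) ^ (1-q)) ^ (1/q) = (2:ℝ) ^ (1/q) * (M:ℝ) ^ (-((q-1)/q)) := by
        rw [Real.mul_rpow (by norm_num) (Real.rpow_nonneg hMpos.le _),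
          ← Real.rpow_mul hMpos.le]
        congr 2
        field_simp
        ring
      rw [h2, h3]
      ring
    have hev : ∀ᶠ M : ℕ in atTop,
        K * (2 * ((2:ℝ) ^ (1/q) * (M:ℝ) ^ (-((q-1)/q))) + 4 * (M:ℝ)⁻¹) < ε/2 :=
      htendN.eventually (gt_mem_nhds (by linarith))
    obtain ⟨M, hM1, hMlt⟩ := ((eventually_ge_atTop 1).and hev).exists
    have := hgrun M hM1
    rw [heq' M hM1] at this
    linarith
  -- y = 0 : conclude the domination
  have hYzero : ‖Y‖ = 0 := by
    refine le_antisymm (lp.norm_le_of_forall_sum_le htq0 le_rfl ?_) (norm_nonneg _)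
    intro s
    have h0 : ∀ i ∈ s, ‖y i‖ ^ (ENNReal.ofReal q).toReal = 0 := by
      intro i _
      rw [hy0 i, norm_zero, Real.zero_rpow htq0.ne']
    rw [Finset.sum_congr rfl h0, Finset.sum_const, smul_zero, Real.zero_rpow htq0.ne']
  have hxu : ∀ t, ‖x (φ₀ (k t)) - u t‖ ≤ 2 * δ t := by
    intro t
    have h1 : x (φ₀ (k t)) - u t = (z (k t) - u t) + Y := by
      have : z (k t) = x (φ₀ (k t)) - Y := by rw [hzdef]
      rw [this]
      abel
    rw [h1]
    refine le_trans (norm_add_le _ _) ?_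
    rw [hYzero]
    have := herr t
    linarith
  refine ⟨fun t => φ₀ (k t), hφ₀.comp hk_mono, 6, by norm_num, ?_⟩
  intro a F
  set A := (∑ t ∈ F, |a t| ^ q) ^ (1/q) with hAdef
  have hA0 : (0:ℝ) ≤ A :=
    Real.rpow_nonneg (Finset.sum_nonneg fun t _ => Real.rpow_nonneg (abs_nonneg _) _) _
  have hmax : ∀ t ∈ F, |a t| ≤ A := by
    intro t ht
    have h1 : |a t| ^ q ≤ ∑ s ∈ F, |a s| ^ q :=
      Finset.single_le_sum (fun s _ => Real.rpow_nonneg (abs_nonneg _) _) ht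
    have h2 := Real.rpow_le_rpow (Real.rpow_nonneg (abs_nonneg _) _) h1
      (by positivity : (0:ℝ) ≤ 1/q)
    rwa [← Real.rpow_mul (abs_nonneg _), mul_one_div, div_self hq0.ne', Real.rpow_one] at h2
  have hsum1 : ‖∑ t ∈ F, a t • x (φ₀ (k t))‖
      ≤ ‖∑ t ∈ F, a t • u t‖ + ∑ t ∈ F, |a t| * (2 * δ t) := by
    have hd : ∑ t ∈ F, a t • x (φ₀ (k t))
        = ∑ t ∈ F, a t • u t + ∑ t ∈ F, a t • (x (φ₀ (k t)) - u t) := by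
      rw [← Finset.sum_add_distrib]
      refine Finset.sum_congr rfl fun t _ => ?_
      rw [← smul_add]
      congr 1
      abel
    rw [hd]
    refine le_trans (norm_add_le _ _) (add_le_add le_rfl ?_)
    refine le_trans (norm_sum_le _ _) (Finset.sum_le_sum fun t _ => ?_)
    rw [norm_smul, Real.norm_eq_abs]
    exact mul_le_mul_of_nonneg_left (hxu t) (abs_nonneg _)
  have h2 : ∑ t ∈ F, |a t| * (2 * δ t) ≤ 4 * A := by
    have hb2 : ∀ t ∈ F, |a t| * (2 * δ t) ≤ A * (2 * δ t) := fun t ht =>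
      mul_le_mul_of_nonneg_right (hmax t ht) (by positivity)
    refine le_trans (Finset.sum_le_sum hb2) ?_
    have : ∑ t ∈ F, A * (2 * δ t) = 2 * A * ∑ t ∈ F, δ t := by
      rw [Finset.mul_sum]
      exact Finset.sum_congr rfl fun t _ => by ring
    rw [this]
    have h4 := hδFsum F
    have h6 : (0:ℝ) ≤ 2 * A := by linarith
    calc 2 * A * ∑ t ∈ F, δ t ≤ 2 * A * 2 := mul_le_mul_of_nonneg_left h4 h6
      _ = 4 * A := by ring
  have h3 : ‖∑ t ∈ F, a t • u t‖ ≤ 2 * A := by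
    have := hblock a F
    rw [htq] at this
    exact this
  have h5 : A ≤ (∑ t ∈ F, |a t| ^ p) ^ (1/p) := lq_le_lp_sum hp hpq F a
  rw [he a F]
  calc ‖∑ n ∈ F, a n • x (φ₀ (k n))‖ ≤ 2 * A + 4 * A := le_trans hsum1 (by linarith)
    _ = 6 * A := by ring
    _ ≤ 6 * (∑ n ∈ F, |a n| ^ p) ^ (1/p) := by linarith


/-- Let `1 ≤ p ≤ q < ∞` and let `e` be the canonical basis of `ℓ_p`.
Then every normalized basic sequence in `ℓ_q` admits a subsequence dominated by `e`;
consequently, for every Banach space `Y` and every `1 ≤ ξ ≤ ω₁`,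
`JS_{e,ξ}(ℓ_q, Y) = WS_{e,ξ}(ℓ_q, Y)`. -/
theorem stmt19 (p q : ℝ) (hp : 1 ≤ p) (hpq : p ≤ q)
    [Fact (1 ≤ ENNReal.ofReal q)]
    {E : Type} [NormedAddCommGroup E] [NormedSpace ℝ E] [CompleteSpace E]
    (e : ℕ → E) (he : IsLpBasis p e) :
    (∀ x : ℕ → lp (fun _ : ℕ => ℝ) (ENNReal.ofReal q),
      (∀ n, ‖x n‖ = 1) → IsBasicSeq x →
        ∃ φ : ℕ → ℕ, StrictMono φ ∧ Dominates e (fun k => x (φ k))) ∧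
    (∀ (𝒮 : SchreierSystem) (ξ : Ordinal), 1 ≤ ξ → ξ ≤ ω₁ →
      ∀ (Y : Type) [NormedAddCommGroup Y] [NormedSpace ℝ Y] [CompleteSpace Y]
        (T : lp (fun _ : ℕ => ℝ) (ENNReal.ofReal q) →L[ℝ] Y),
        (MemJS 𝒮 ξ e T ↔ MemWS 𝒮 ξ e T)) := by
  constructor
  · intro x hn hb
    exact key_extract p q hp hpq e he x hn hb
  · intro 𝒮 ξ _ _ Y _ _ _ T
    constructor
    · intro hJS x hn hb hSD
      obtain ⟨φ, hφ, hdom⟩ := key_extract p q hp hpq e he x hn hb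
      refine hJS (fun k => x (φ k)) (fun k => hn (φ k)) (isBasicSeq_subseq hb φ hφ) hdom ?_
      obtain ⟨C, hC1, hC⟩ := hSD
      refine ⟨C, hC1, ?_⟩
      intro a F hF
      classical
      set b : ℕ → ℝ := fun i => ∑ t ∈ F, if φ t = i then a t else 0 with hbdef
      have hG : F.image φ ∈ 𝒮.S ξ := schreier_spread 𝒮 φ hφ ξ F hF
      have h1 := hC b (F.image φ) hG
      have he2 : ∑ i ∈ F.image φ, b i • (fun n => T (x n)) i
          = ∑ t ∈ F, a t • T (x (φ t)) := by
        rw [transfer_sum]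
        exact Finset.sum_congr rfl fun t ht => if_pos (Finset.mem_image_of_mem φ ht)
      have hbp : ∑ i ∈ F.image φ, |b i| ^ p = ∑ t ∈ F, |a t| ^ p := by
        rw [Finset.sum_image (fun s _ t _ h => hφ.injective h)]
        exact Finset.sum_congr rfl fun t ht => by
          rw [hbdef]; simp only []
          rw [transfer_apply φ hφ.injective a F ht]
      calc ‖∑ n ∈ F, a n • e n‖ = (∑ t ∈ F, |a t| ^ p) ^ (1/p) := he a F
        _ = (∑ i ∈ F.image φ, |b i| ^ p) ^ (1/p) := by rw [hbp]
        _ = ‖∑ i ∈ F.image φ, b i • e i‖ := (he b _).symm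
        _ ≤ C * ‖∑ i ∈ F.image φ, b i • (fun n => T (x n)) i‖ := h1
        _ = C * ‖∑ t ∈ F, a t • T (x (φ t))‖ := by rw [he2]
    · intro hWS x hn hb _
      exact hWS x hn hb
end
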